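/- arXiv:2008.03386 — 3 statements merged into one kernel-verified Lean document; each statement's English description precedes it below -/
import Mathlib

section
/- Let κ be an infinite cardinal with the tree property. Then every epimorphism of inverse systems of small abelian groups onto the constant system ℤ splits: for every inverse system (Q_ξ, q_{ηξ})_{η≤ξ<κ} of abelian groups over κ with |Q_ξ| < κ for all ξ < κ, and every family of surjective group homomorphisms e_ξ : Q_ξ → ℤ satisfying e_η ∘ q_{ηξ} = e_ξ for all η ≤ ξ < κ, there exists a family of group homomorphisms s_ξ : ℤ → Q_ξ with q_{ηξ} ∘ s_ξ = s_η and e_ξ ∘ s_ξ = id_ℤ for all η ≤ ξ < κ. -/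
noncomputable section

/-- A relation `lt` on `T` is tree-like when the set of predecessors of every node is
well-ordered by `lt`. -/
def PredWO {T : Type} (lt : T → T → Prop) : Prop :=
  ∀ t : T, IsWellOrder {s : T // lt s t} fun a b => lt a.1 b.1

/-- The height of a node: the order type of its set of predecessors. -/
def nodeHt {T : Type} {lt : T → T → Prop} (h : PredWO lt) (t : T) : Ordinal :=
  @Ordinal.type {s : T // lt s t} (fun a b => lt a.1 b.1) (h t)

/-- `(T, lt)` is a `κ`-tree: a tree (a strict partial order with well-ordered sets of
predecessors) of height `κ` all of whose levels have cardinality `< κ`. -/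
def IsKappaTree (κ : Cardinal) {T : Type} (lt : T → T → Prop) (h : PredWO lt) : Prop :=
  IsStrictOrder T lt ∧
  (∀ t : T, nodeHt h t < κ.ord) ∧
  (∀ o : Ordinal, o < κ.ord → ∃ t : T, nodeHt h t = o) ∧
  (∀ o : Ordinal, Cardinal.mk {t : T // nodeHt h t = o} < κ)

/-- The tree has a cofinal branch: a maximal chain containing nodes of every height
below `κ`. -/
def HasCofinalBranch (κ : Cardinal) {T : Type} (lt : T → T → Prop) (h : PredWO lt) : Prop :=
  ∃ b : Set T, IsMaxChain lt b ∧ ∀ o : Ordinal, o < κ.ord → ∃ t ∈ b, nodeHt h t = o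

/-- `κ` has the tree property: every `κ`-tree has a cofinal branch
(no `κ`-Aronszajn trees). -/
def TreeProp (κ : Cardinal) : Prop :=
  ∀ (T : Type) (lt : T → T → Prop) (h : PredWO lt),
    IsKappaTree κ lt h → HasCofinalBranch κ lt h

/-- An inverse system of abelian groups over the ordinal `ε`. -/
structure InvSys (ε : Ordinal) where
  G : Set.Iio ε → Type
  [grp : ∀ α, AddCommGroup (G α)]
  map : ∀ {α β : Set.Iio ε}, α ≤ β → G β →+ G α
  map_id : ∀ α : Set.Iio ε, map (le_refl α) = AddMonoidHom.id (G α)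
  map_comp : ∀ {α β γ : Set.Iio ε} (h₁ : α ≤ β) (h₂ : β ≤ γ) (x : G γ),
    map h₁ (map h₂ x) = map (h₁.trans h₂) x

attribute [instance] InvSys.grp


section Aux

/-- The canonical well-order on `κ.ord.ToType` (named, to help instance resolution). -/
def tlt (κ : Cardinal.{0}) : κ.ord.ToType → κ.ord.ToType → Prop := (· < ·)

instance tlt_wo (κ : Cardinal.{0}) : IsWellOrder κ.ord.ToType (tlt κ) := isWellOrder_lt

/-- index map from `κ.ord.ToType` to `Set.Iio κ.ord`. -/
def idx (κ : Cardinal.{0}) (i : κ.ord.ToType) : Set.Iio κ.ord :=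
  ⟨Ordinal.typein (tlt κ) i, Ordinal.typein_lt_self i⟩

lemma idx_mono {κ : Cardinal.{0}} {i j : κ.ord.ToType} (h : i ≤ j) : idx κ i ≤ idx κ j := by
  have : ¬ tlt κ j i := not_lt.2 h
  exact (Ordinal.typein_le_typein (tlt κ)).2 this

lemma idx_inj {κ : Cardinal.{0}} : Function.Injective (idx κ) := by
  intro i j h
  exact Ordinal.typein_injective (tlt κ) (congrArg Subtype.val h)

variable {κ : Cardinal.{0}} (X : InvSys κ.ord) (e : ∀ ξ : Set.Iio κ.ord, X.G ξ →+ ℤ)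

/-- Nodes of the tree: pairs of a point `i` below `κ` and an element of `X.G (idx κ i)`
mapping to `1`. -/
def Node := Σ i : κ.ord.ToType, {x : X.G (idx κ i) // e (idx κ i) x = 1}

/-- The tree order on nodes. -/
def nlt (a b : Node X e) : Prop :=
  tlt κ a.1 b.1 ∧ ∀ h : idx κ a.1 ≤ idx κ b.1, X.map h b.2.1 = a.2.1

variable (hcomm : ∀ (η ξ : Set.Iio κ.ord) (h : η ≤ ξ) (x : X.G ξ), e η (X.map h x) = e ξ x)

include hcomm

/-- The predecessors of a node are order isomorphic to the points below its index. -/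
def predIso (t : Node X e) :
    RelIso (fun a b : {s : Node X e // nlt X e s t} => nlt X e a.1 b.1)
      (Subrel (tlt κ) {i : κ.ord.ToType | tlt κ i t.1}) where
  toFun s := ⟨s.1.1, s.2.1⟩
  invFun i := ⟨⟨i.1, ⟨X.map (idx_mono (le_of_lt i.2)) t.2.1, by
      rw [hcomm _ _ _ t.2.1]; exact t.2.2⟩⟩,
    ⟨i.2, fun h => rfl⟩⟩
  left_inv := by
    rintro ⟨⟨i, x, hx⟩, hlt, hmap⟩
    have := hmap (idx_mono (le_of_lt hlt))
    apply Subtype.ext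
    dsimp only
    exact Sigma.ext rfl (heq_of_eq (Subtype.ext this))
  right_inv := by rintro ⟨i, hi⟩; rfl
  map_rel_iff' := by
    rintro ⟨⟨i, x, hx⟩, hi, hix⟩ ⟨⟨j, y, hy⟩, hj, hjy⟩
    constructor
    · intro h
      refine ⟨h, fun hle => ?_⟩
      have h1 := hix (idx_mono (le_of_lt hi))
      have h2 := hjy (idx_mono (le_of_lt hj))
      dsimp only at h1 h2 ⊢
      have h3 := X.map_comp hle (idx_mono (le_of_lt hj)) t.2.1
      rw [h2] at h3
      rw [h3]; exact h1
    · intro h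
      exact h.1

lemma predWO : PredWO (nlt X e) := fun t =>
  haveI : IsWellOrder _ (Subrel (tlt κ) {i : κ.ord.ToType | tlt κ i t.1}) :=
    inferInstanceAs (IsWellOrder _ (Subrel (tlt κ) (fun i => tlt κ i t.1)))
  (RelIso.toRelEmbedding (predIso X e hcomm t)).isWellOrder

lemma nodeHt_eq (t : Node X e) :
    nodeHt (predWO X e hcomm) t = Ordinal.typein (tlt κ) t.1 := by
  rw [← Ordinal.type_subrel (tlt κ) t.1]
  exact (@Ordinal.type_eq _ _ _ _ (predWO X e hcomm t) inferInstance).2 ⟨predIso X e hcomm t⟩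

end Aux

/-- If the infinite cardinal `κ` has the tree property, then every epimorphism of
inverse systems of size-`< κ` abelian groups over `κ` onto the constant system `ℤ`
splits. -/
theorem stmt10 (κ : Cardinal) (hκ : Cardinal.aleph0 ≤ κ) (htp : TreeProp κ)
    (X : InvSys κ.ord)
    (hsmall : ∀ ξ : Set.Iio κ.ord, Cardinal.mk (X.G ξ) < κ)
    (e : ∀ ξ : Set.Iio κ.ord, X.G ξ →+ ℤ)
    (hsurj : ∀ ξ : Set.Iio κ.ord, Function.Surjective (e ξ))
    (hcomm : ∀ (η ξ : Set.Iio κ.ord) (h : η ≤ ξ) (x : X.G ξ), e η (X.map h x) = e ξ x) :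
    ∃ s : ∀ ξ : Set.Iio κ.ord, ℤ →+ X.G ξ,
      (∀ (η ξ : Set.Iio κ.ord) (h : η ≤ ξ) (m : ℤ), X.map h (s ξ m) = s η m) ∧
      ∀ (ξ : Set.Iio κ.ord) (m : ℤ), e ξ (s ξ m) = m := by
  classical
  have hPW := predWO X e hcomm
  have htyp_lt : ∀ i : κ.ord.ToType, Ordinal.typein (tlt κ) i < κ.ord := by
    intro i
    have h := Ordinal.typein_lt_type (tlt κ) i
    rwa [show Ordinal.type (tlt κ) = κ.ord from Ordinal.type_toType _] at h
  -- the tree is a κ-tree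
  have hirr : IsIrrefl (Node X e) (nlt X e) := ⟨fun a h => lt_irrefl a.1 h.1⟩
  have htr : IsTrans (Node X e) (nlt X e) := by
    refine ⟨fun a b c hab hbc => ⟨lt_trans hab.1 hbc.1, fun h => ?_⟩⟩
    have h1 := hab.2 (idx_mono (le_of_lt hab.1))
    have h2 := hbc.2 (idx_mono (le_of_lt hbc.1))
    rw [← X.map_comp (idx_mono (le_of_lt hab.1)) (idx_mono (le_of_lt hbc.1)), h2, h1]
  have htree : IsKappaTree κ (nlt X e) hPW := by
    refine ⟨⟨⟩, ?_, ?_, ?_⟩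
    · intro t
      rw [nodeHt_eq X e hcomm]
      exact htyp_lt t.1
    · intro o ho
      obtain ⟨i, hi⟩ := Ordinal.typein_surj (tlt κ)
        (by rwa [show Ordinal.type (tlt κ) = κ.ord from Ordinal.type_toType _])
      obtain ⟨x, hx⟩ := hsurj (idx κ i) 1
      exact ⟨⟨i, x, hx⟩, by exact (nodeHt_eq X e hcomm ⟨i, x, hx⟩).trans hi⟩
    · intro o
      by_cases hlev : ∃ i : κ.ord.ToType, Ordinal.typein (tlt κ) i = o
      · obtain ⟨j, hj⟩ := hlev
        have hfst : ∀ t : {t : Node X e // nodeHt hPW t = o}, t.1.1 = j := by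
          intro t
          apply Ordinal.typein_injective (tlt κ)
          rw [hj, ← nodeHt_eq X e hcomm]
          exact t.2
        have hle : ∀ t : {t : Node X e // nodeHt hPW t = o}, idx κ j ≤ idx κ t.1.1 :=
          fun t => le_of_eq (congrArg (idx κ) (hfst t).symm)
        have hinj : Function.Injective
            (fun t : {t : Node X e // nodeHt hPW t = o} => X.map (hle t) t.1.2.1) := by
          intro t t' heq
          obtain ⟨⟨i, x, hx⟩, ht⟩ := t
          obtain ⟨⟨i', x', hx'⟩, ht'⟩ := t'
          have hij : i = j := hfst ⟨⟨i, x, hx⟩, ht⟩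
          have hij' : i' = j := hfst ⟨⟨i', x', hx'⟩, ht'⟩
          subst hij
          subst hij'
          have heq2 : X.map (le_refl (idx κ i')) x = X.map (le_refl (idx κ i')) x' := heq
          rw [X.map_id] at heq2
          exact Subtype.ext (Sigma.ext rfl (heq_of_eq (Subtype.ext heq2)))
        exact lt_of_le_of_lt (Cardinal.mk_le_of_injective hinj) (hsmall (idx κ j))
      · have hempty : IsEmpty {t : Node X e // nodeHt hPW t = o} := by
          refine ⟨fun t => hlev ⟨t.1.1, ?_⟩⟩
          rw [← nodeHt_eq X e hcomm]
          exact t.2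
        rw [Cardinal.mk_eq_zero]
        exact lt_of_lt_of_le Cardinal.aleph0_pos hκ
  -- get a cofinal branch
  obtain ⟨bS, hmax, hcof⟩ := htp _ _ hPW htree
  have pick : ∀ ξ : Set.Iio κ.ord, ∃ t, t ∈ bS ∧ nodeHt hPW t = ξ.1 := by
    intro ξ
    obtain ⟨t, htb, hth⟩ := hcof ξ.1 ξ.2
    exact ⟨t, htb, hth⟩
  choose t ht1 ht2 using pick
  have htyp : ∀ ξ, Ordinal.typein (tlt κ) (t ξ).1 = ξ.1 := by
    intro ξ
    rw [← nodeHt_eq X e hcomm]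
    exact ht2 ξ
  have hidx : ∀ ξ, idx κ (t ξ).1 = ξ := fun ξ => Subtype.ext (htyp ξ)
  set x : ∀ ξ : Set.Iio κ.ord, X.G ξ := fun ξ => X.map (hidx ξ).ge (t ξ).2.1 with hxdef
  have hx1 : ∀ ξ, e ξ (x ξ) = 1 := by
    intro ξ
    rw [hxdef]
    dsimp only
    rw [hcomm _ _ _ (t ξ).2.1]
    exact (t ξ).2.2
  have key : ∀ (η ξ : Set.Iio κ.ord) (h : η ≤ ξ), X.map h (x ξ) = x η := by
    intro η ξ h
    rcases eq_or_ne η ξ with rfl | hne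
    · exact (show X.map (le_refl η) (x η) = x η by rw [X.map_id]; rfl)
    · have hlt : η < ξ := h.lt_of_ne hne
      have htne : t η ≠ t ξ := by
        intro hEq
        have : η.1 = ξ.1 := by rw [← ht2 η, ← ht2 ξ, hEq]
        exact hne (Subtype.ext this)
      rcases hmax.1 (ht1 η) (ht1 ξ) htne with hc | hc
      · have hmap := hc.2 (idx_mono (le_of_lt hc.1))
        show X.map h (X.map (hidx ξ).ge (t ξ).2.1) = X.map (hidx η).ge (t η).2.1
        rw [← hmap, X.map_comp, X.map_comp]
      · exfalso
        have hlt2 := (Ordinal.typein_lt_typein (tlt κ)).2 hc.1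
        rw [htyp η, htyp ξ] at hlt2
        exact absurd hlt2 (not_lt.2 (le_of_lt hlt))
  refine ⟨fun ξ => zmultiplesHom _ (x ξ), ?_, ?_⟩
  · intro η ξ h m
    rw [zmultiplesHom_apply, zmultiplesHom_apply, map_zsmul, key η ξ h]
  · intro ξ m
    rw [zmultiplesHom_apply, map_zsmul, hx1, smul_eq_mul, mul_one]
end
end

section
/- Let κ be an infinite cardinal carrying a κ-Aronszajn tree. Then there exist an inverse system (Q_ξ, q_{ηξ})_{η≤ξ<κ} of abelian groups over κ, each Q_ξ having a generating set of cardinality less than κ, together with surjective group homomorphisms e_ξ : Q_ξ → ℤ satisfying e_η ∘ q_{ηξ} = e_ξ for all η ≤ ξ < κ, such that there is no family of group homomorphisms s_ξ : ℤ → Q_ξ with q_{ηξ} ∘ s_ξ = s_η and e_ξ ∘ s_ξ = id_ℤ for all η ≤ ξ < κ. -/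
noncomputable section

section TreeAux

variable {T : Type} {lt : T → T → Prop}

theorem le'_trans (htr : Transitive lt) {u v t : T}
    (h1 : lt u v ∨ u = v) (h2 : lt v t ∨ v = t) : lt u t ∨ u = t := by
  rcases h1 with h1 | rfl
  · rcases h2 with h2 | rfl
    · exact Or.inl (htr h1 h2)
    · exact Or.inl h1
  · exact h2

theorem nodeHt_eq_typein (h : PredWO lt) (htr : Transitive lt) {s t : T} (hst : lt s t) :
    nodeHt h s =
      (@Ordinal.typein {u : T // lt u t} (fun a b => lt a.1 b.1) (h t)) ⟨s, hst⟩ := by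
  haveI := h t
  haveI := h s
  rw [← Ordinal.type_subrel]
  exact RelIso.ordinal_type_eq
    ⟨⟨fun v => ⟨⟨v.1, htr v.2 hst⟩, v.2⟩, fun b => ⟨b.1.1, b.2⟩,
      fun v => rfl, fun b => rfl⟩, Iff.rfl⟩

theorem nodeHt_lt_of_lt (h : PredWO lt) (htr : Transitive lt) {s t : T} (hst : lt s t) :
    nodeHt h s < nodeHt h t := by
  haveI := h t
  rw [nodeHt_eq_typein h htr hst]
  exact Ordinal.typein_lt_type (fun a b : {u : T // lt u t} => lt a.1 b.1) ⟨s, hst⟩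

theorem exists_pred (h : PredWO lt) (htr : Transitive lt) {t : T} {o : Ordinal}
    (ho : o ≤ nodeHt h t) : ∃ u : T, (lt u t ∨ u = t) ∧ nodeHt h u = o := by
  rcases eq_or_lt_of_le ho with he | hlt
  · exact ⟨t, Or.inr rfl, he.symm⟩
  · haveI := h t
    obtain ⟨a, ha⟩ := Ordinal.typein_surj (fun a b : {u : T // lt u t} => lt a.1 b.1) hlt
    exact ⟨a.1, Or.inl a.2, (nodeHt_eq_typein h htr a.2).trans ha⟩

theorem pred_unique (h : PredWO lt) (htr : Transitive lt) {t u v : T}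
    (hu : lt u t ∨ u = t) (hv : lt v t ∨ v = t)
    (he : nodeHt h u = nodeHt h v) : u = v := by
  haveI := h t
  rcases hu with hu | rfl <;> rcases hv with hv | rfl
  · have heq := (nodeHt_eq_typein h htr hu).symm.trans (he.trans (nodeHt_eq_typein h htr hv))
    exact congrArg Subtype.val (Ordinal.typein_injective _ heq)
  · have := nodeHt_lt_of_lt h htr hu
    rw [he] at this
    exact absurd this (lt_irrefl _)
  · have := nodeHt_lt_of_lt h htr hv
    rw [he] at this
    exact absurd this (lt_irrefl _)
  · rfl

def predAt (h : PredWO lt) (htr : Transitive lt) (t : T) (o : Ordinal)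
    (ho : o ≤ nodeHt h t) : T :=
  (exists_pred h htr ho).choose

theorem predAt_le' (h : PredWO lt) (htr : Transitive lt) (t : T) (o : Ordinal)
    (ho : o ≤ nodeHt h t) : lt (predAt h htr t o ho) t ∨ predAt h htr t o ho = t :=
  (exists_pred h htr ho).choose_spec.1

theorem nodeHt_predAt (h : PredWO lt) (htr : Transitive lt) (t : T) (o : Ordinal)
    (ho : o ≤ nodeHt h t) : nodeHt h (predAt h htr t o ho) = o :=
  (exists_pred h htr ho).choose_spec.2

theorem predAt_eq (h : PredWO lt) (htr : Transitive lt) {t u : T} {o : Ordinal}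
    (ho : o ≤ nodeHt h t) (hu : lt u t ∨ u = t) (hnu : nodeHt h u = o) :
    predAt h htr t o ho = u :=
  pred_unique h htr (predAt_le' h htr t o ho) hu (by rw [nodeHt_predAt, hnu])

@[reducible] def Lev (h : PredWO lt) (o : Ordinal) : Type := {t : T // nodeHt h t = o}

def levPred (h : PredWO lt) (htr : Transitive lt) {o₁ o₂ : Ordinal} (hle : o₁ ≤ o₂)
    (t : Lev h o₂) : Lev h o₁ :=
  ⟨predAt h htr t.1 o₁ (by rw [t.2]; exact hle),
   nodeHt_predAt h htr t.1 o₁ (by rw [t.2]; exact hle)⟩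

theorem levPred_le' (h : PredWO lt) (htr : Transitive lt) {o₁ o₂ : Ordinal} (hle : o₁ ≤ o₂)
    (t : Lev h o₂) :
    lt (levPred h htr hle t).1 t.1 ∨ (levPred h htr hle t).1 = t.1 :=
  predAt_le' h htr t.1 o₁ (by rw [t.2]; exact hle)

theorem levPred_id (h : PredWO lt) (htr : Transitive lt) {o : Ordinal} (hle : o ≤ o)
    (t : Lev h o) : levPred h htr hle t = t :=
  Subtype.ext (predAt_eq h htr (le_of_eq t.2.symm) (Or.inr rfl) t.2)

theorem levPred_comp (h : PredWO lt) (htr : Transitive lt) {o₁ o₂ o₃ : Ordinal}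
    (h1 : o₁ ≤ o₂) (h2 : o₂ ≤ o₃) (h3 : o₁ ≤ o₃) (t : Lev h o₃) :
    levPred h htr h1 (levPred h htr h2 t) = levPred h htr h3 t := by
  apply Subtype.ext
  exact (predAt_eq h htr (t := t.1) (by rw [t.2]; exact h3)
    (le'_trans htr (levPred_le' h htr h1 (levPred h htr h2 t)) (levPred_le' h htr h2 t))
    (levPred h htr h1 (levPred h htr h2 t)).2).symm

theorem chain_cofinal_branch (h : PredWO lt) (htr : Transitive lt) (κ : Cardinal)
    (c : Set T) (hc : IsChain lt c)
    (hcof : ∀ o : Ordinal, o < κ.ord → ∃ t ∈ c, o ≤ nodeHt h t) :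
    ∃ b : Set T, IsMaxChain lt b ∧ ∀ o : Ordinal, o < κ.ord → ∃ t ∈ b, nodeHt h t = o := by
  have key : ∀ {a b w : T}, (lt a w ∨ a = w) → (lt b w ∨ b = w) → a ≠ b →
      lt a b ∨ lt b a := by
    intro a b w ha hb hab
    rcases ha with ha | rfl <;> rcases hb with hb | rfl
    · haveI := h w
      rcases @trichotomous _ (fun x y : {u : T // lt u w} => lt x.1 y.1) _ ⟨a, ha⟩ ⟨b, hb⟩
        with h1 | h1 | h1
      · exact Or.inl h1
      · exact absurd (congrArg Subtype.val h1) hab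
      · exact Or.inr h1
    · exact Or.inl ha
    · exact Or.inr hb
    · exact absurd rfl hab
  have hchain : IsChain lt {u | ∃ t ∈ c, lt u t ∨ u = t} := by
    rintro u ⟨t₁, ht₁, hu⟩ v ⟨t₂, ht₂, hv⟩ hne
    rcases eq_or_ne t₁ t₂ with rfl | hne'
    · exact key hu hv hne
    · rcases hc ht₁ ht₂ hne' with h12 | h21
      · exact key (le'_trans htr hu (Or.inl h12)) hv hne
      · exact key hu (le'_trans htr hv (Or.inl h21)) hne
  obtain ⟨M, hM, hdM⟩ := hchain.exists_maxChain
  refine ⟨M, hM, fun o ho => ?_⟩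
  obtain ⟨t, htc, hot⟩ := hcof o ho
  exact ⟨predAt h htr t o hot, hdM ⟨t, htc, predAt_le' h htr t o hot⟩,
    nodeHt_predAt h htr t o hot⟩

end TreeAux

theorem exists_greedy_chain {A : Type*} {I : Type*} [LinearOrder I] (P : I → A → Prop)
    (R : A → A → Prop) (htrR : Transitive R) (hrefl : Reflexive R)
    (f : ℕ → I) (h0 : ∃ a, P (f 0) a)
    (hstep : ∀ i j a, i ≤ j → P i a → ∃ b, P j b ∧ R a b) :
    ∃ g : ℕ → I × A, (∀ m, P (g m).1 (g m).2) ∧ (∀ m, f m ≤ (g m).1) ∧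
      ∀ i j, i ≤ j → R (g i).2 (g j).2 := by
  choose b hb1 hb2 using hstep
  obtain ⟨a0, ha0⟩ := h0
  let g0 : ℕ → {p : I × A // P p.1 p.2} := fun m => Nat.rec
    ⟨(f 0, a0), ha0⟩
    (fun m prev =>
      ⟨(max prev.1.1 (f (m + 1)),
        b prev.1.1 (max prev.1.1 (f (m + 1))) prev.1.2 (le_max_left _ _) prev.2),
       hb1 _ _ _ _ _⟩) m
  have hstep' : ∀ m, R (g0 m).1.2 (g0 (m + 1)).1.2 := fun m => hb2 _ _ _ _ _
  have hchain : ∀ i j, i ≤ j → R (g0 i).1.2 (g0 j).1.2 := by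
    intro i j hij
    induction j with
    | zero => rw [Nat.le_zero.mp hij]; exact hrefl _
    | succ j ih =>
      rcases eq_or_lt_of_le hij with rfl | hlt
      · exact hrefl _
      · exact htrR (ih (Nat.lt_succ_iff.mp hlt)) (hstep' j)
  refine ⟨fun m => (g0 m).1, fun m => (g0 m).2, ?_, hchain⟩
  intro m
  cases m with
  | zero => exact le_refl _
  | succ m => exact le_max_right _ _



/-- If the infinite cardinal `κ` carries a `κ`-Aronszajn tree, then there is an
inverse system of abelian groups over `κ`, each with a generating set of size `< κ`,
together with an epimorphism onto the constant system `ℤ` admitting no section. -/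
theorem stmt11 (κ : Cardinal) (hκ : Cardinal.aleph0 ≤ κ)
    (hA : ∃ (T : Type) (lt : T → T → Prop) (h : PredWO lt),
      IsKappaTree κ lt h ∧ ¬ HasCofinalBranch κ lt h) :
    ∃ (X : InvSys κ.ord) (e : ∀ ξ : Set.Iio κ.ord, X.G ξ →+ ℤ),
      (∀ ξ : Set.Iio κ.ord, ∃ S : Set (X.G ξ),
        Cardinal.mk S < κ ∧ AddSubgroup.closure S = ⊤) ∧
      (∀ ξ : Set.Iio κ.ord, Function.Surjective (e ξ)) ∧
      (∀ (η ξ : Set.Iio κ.ord) (h : η ≤ ξ) (x : X.G ξ), e η (X.map h x) = e ξ x) ∧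
      ¬ ∃ s : ∀ ξ : Set.Iio κ.ord, ℤ →+ X.G ξ,
          (∀ (η ξ : Set.Iio κ.ord) (h : η ≤ ξ) (m : ℤ), X.map h (s ξ m) = s η m) ∧
          ∀ (ξ : Set.Iio κ.ord) (m : ℤ), e ξ (s ξ m) = m := by
  classical
  obtain ⟨T, lt, h, hTree, hnb⟩ := hA
  obtain ⟨hso, hht, hlev, hcard⟩ := hTree
  have htr : Transitive lt := fun _ _ _ h1 h2 => hso.toIsTrans.trans _ _ _ h1 h2
  refine ⟨{
      G := fun ξ => Lev h ξ.1 →₀ ℤ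
      grp := fun _ => inferInstance
      map := fun {α β} hle => Finsupp.mapDomain.addMonoidHom (levPred h htr hle)
      map_id := ?_
      map_comp := ?_ },
    fun ξ => Finsupp.liftAddHom (fun _ => AddMonoidHom.id ℤ), ?_, ?_, ?_, ?_⟩
  · intro α
    refine Finsupp.addHom_ext fun a b => ?_
    show Finsupp.mapDomain (levPred h htr (le_refl α)) (Finsupp.single a b) = Finsupp.single a b
    rw [Finsupp.mapDomain_single, levPred_id h htr (le_refl α) a]
  · intro α β γ h₁ h₂ x
    show Finsupp.mapDomain (levPred h htr h₁) (Finsupp.mapDomain (levPred h htr h₂) x)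
      = Finsupp.mapDomain (levPred h htr (h₁.trans h₂)) x
    rw [← Finsupp.mapDomain_comp,
      show levPred h htr (lt := lt) h₁ ∘ levPred h htr h₂ = levPred h htr (h₁.trans h₂) from
        funext (levPred_comp h htr h₁ h₂ (h₁.trans h₂))]
  · intro ξ
    refine ⟨Set.range (fun t : Lev h ξ.1 => Finsupp.single t (1 : ℤ)), ?_, ?_⟩
    · exact lt_of_le_of_lt Cardinal.mk_range_le (hcard ξ.1)
    · rw [eq_top_iff]
      intro f hmem
      clear hmem
      induction f using Finsupp.induction_linear with
      | zero => exact zero_mem _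
      | add f g hf hg => exact add_mem hf hg
      | single a b =>
        have h1 : (Finsupp.single a (1 : ℤ)) ∈
            AddSubgroup.closure (Set.range fun t : Lev h ξ.1 => Finsupp.single t (1 : ℤ)) :=
          AddSubgroup.subset_closure ⟨a, rfl⟩
        induction b using Int.induction_on with
        | zero => rw [Finsupp.single_zero]; exact zero_mem _
        | succ k ih => rw [Finsupp.single_add]; exact add_mem ih h1
        | pred k ih =>
          have h2 : (Finsupp.single a (-1 : ℤ)) ∈
              AddSubgroup.closure (Set.range fun t : Lev h ξ.1 => Finsupp.single t (1 : ℤ)) := by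
            have h3 := neg_mem h1
            rwa [← Finsupp.single_neg] at h3
          rw [sub_eq_add_neg, Finsupp.single_add]
          exact add_mem ih h2
  · intro ξ m
    obtain ⟨t, ht⟩ := hlev ξ.1 ξ.2
    exact ⟨Finsupp.single ⟨t, ht⟩ m, by rw [Finsupp.liftAddHom_apply_single]; rfl⟩
  · intro η ξ hle x
    show Finsupp.liftAddHom (fun _ => AddMonoidHom.id ℤ)
        (Finsupp.mapDomain (levPred h htr hle) x)
      = Finsupp.liftAddHom (fun _ => AddMonoidHom.id ℤ) x
    induction x using Finsupp.induction_linear with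
    | zero => rw [Finsupp.mapDomain_zero]; rfl
    | add f g hf hg => rw [Finsupp.mapDomain_add, map_add, map_add, hf, hg]
    | single a b =>
      rw [Finsupp.mapDomain_single, Finsupp.liftAddHom_apply_single,
        Finsupp.liftAddHom_apply_single]
  · rintro ⟨s, hcompat, hsec⟩
    apply hnb
    have hmap : ∀ {η ξ : Set.Iio κ.ord} (hle : η ≤ ξ),
        Finsupp.mapDomain (levPred h htr hle) (s ξ 1) = s η 1 :=
      fun {η ξ} hle => hcompat η ξ hle 1
    have hne : ∀ ξ : Set.Iio κ.ord, (s ξ 1).support.Nonempty := by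
      intro ξ
      rw [Finsupp.support_nonempty_iff]
      intro h0
      have h1 := hsec ξ 1
      rw [h0, map_zero] at h1
      exact one_ne_zero h1.symm
    have hext : ∀ {η ξ : Set.Iio κ.ord} (hle : η ≤ ξ),
        (s η 1).support ⊆ Finset.image (levPred h htr hle) (s ξ 1).support := by
      intro η ξ hle
      rw [← hmap hle]
      exact Finsupp.mapDomain_support
    have hmono : ∀ {η ξ : Set.Iio κ.ord}, η ≤ ξ →
        (s η 1).support.card ≤ (s ξ 1).support.card :=
      fun {η ξ} hle => le_trans (Finset.card_le_card (hext hle)) Finset.card_image_le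
    by_cases hbd : ∃ B, ∀ ξ : Set.Iio κ.ord, (s ξ 1).support.card ≤ B
    · -- bounded case
      have hpos : (0 : Ordinal) < κ.ord :=
        lt_of_lt_of_le Ordinal.omega0_pos
          (by rw [← Cardinal.ord_aleph0]; exact Cardinal.ord_le_ord.2 hκ)
      obtain ⟨ξ₁, hstab⟩ : ∃ ξ₁ : Set.Iio κ.ord, ∀ ξ, ξ₁ ≤ ξ →
          (s ξ 1).support.card = (s ξ₁ 1).support.card := by
        obtain ⟨B, hB⟩ := hbd
        have hran : (Set.range fun ξ : Set.Iio κ.ord => (s ξ 1).support.card).Nonempty :=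
          ⟨_, ⟨⟨0, hpos⟩, rfl⟩⟩
        have hbdd : BddAbove (Set.range fun ξ : Set.Iio κ.ord => (s ξ 1).support.card) :=
          ⟨B, by rintro _ ⟨ξ, rfl⟩; exact hB ξ⟩
        obtain ⟨ξ₁, hξ₁⟩ := Nat.sSup_mem hran hbdd
        exact ⟨ξ₁, fun ξ hle =>
          le_antisymm (le_trans (le_csSup hbdd ⟨ξ, rfl⟩) (le_of_eq hξ₁.symm)) (hmono hle)⟩
      have himg : ∀ {η ξ : Set.Iio κ.ord} (h1 : ξ₁ ≤ η) (hle : η ≤ ξ),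
          Finset.image (levPred h htr hle) (s ξ 1).support = (s η 1).support := by
        intro η ξ h1 hle
        refine (Finset.eq_of_subset_of_card_le (hext hle) ?_).symm
        calc (Finset.image (levPred h htr hle) (s ξ 1).support).card
            ≤ (s ξ 1).support.card := Finset.card_image_le
          _ = (s ξ₁ 1).support.card := hstab ξ (h1.trans hle)
          _ = (s η 1).support.card := (hstab η h1).symm
      have hinj : ∀ {η ξ : Set.Iio κ.ord} (h1 : ξ₁ ≤ η) (hle : η ≤ ξ),
          Set.InjOn (levPred h htr hle) (s ξ 1).support := by
        intro η ξ h1 hle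
        apply Finset.card_image_iff.mp
        rw [himg h1 hle, hstab ξ (h1.trans hle), hstab η h1]
      obtain ⟨sstar, hsstar⟩ := hne ξ₁
      have key : ∀ {ξ ξ' : Set.Iio κ.ord} (h1 : ξ₁ ≤ ξ) (h1' : ξ₁ ≤ ξ') (hle : ξ ≤ ξ')
          (w : Lev h ξ.1) (w' : Lev h ξ'.1), w ∈ (s ξ 1).support → w' ∈ (s ξ' 1).support →
          levPred h htr h1 w = sstar → levPred h htr h1' w' = sstar →
          lt w.1 w'.1 ∨ w.1 = w'.1 := by
        intro ξ ξ' h1 h1' hle w w' hw hw' hws hws'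
        have hu' : levPred h htr hle w' ∈ (s ξ 1).support := by
          rw [← himg h1 hle]
          exact Finset.mem_image_of_mem _ hw'
        have hcs : levPred h htr h1 (levPred h htr hle w') = sstar := by
          rw [levPred_comp h htr h1 hle h1' w']
          exact hws'
        have heq := hinj (le_refl ξ₁) h1 (Finset.mem_coe.mpr hu') (Finset.mem_coe.mpr hw)
          (hcs.trans hws.symm)
        rw [← heq]
        exact levPred_le' h htr hle w'
      apply chain_cofinal_branch h htr κ
        {u | ∃ (ξ : Set.Iio κ.ord) (h1 : ξ₁ ≤ ξ) (w : Lev h ξ.1),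
          w ∈ (s ξ 1).support ∧ levPred h htr h1 w = sstar ∧ u = w.1}
      · rintro u ⟨ξ, h1, w, hw, hws, rfl⟩ v ⟨ξ', h1', w', hw', hws', rfl⟩ hne'
        rcases le_total ξ ξ' with hle | hle
        · rcases key h1 h1' hle w w' hw hw' hws hws' with h' | h'
          · exact Or.inl h'
          · exact absurd h' hne'
        · rcases key h1' h1 hle w' w hw' hw hws' hws with h' | h'
          · exact Or.inr h'
          · exact absurd h'.symm hne'
      · intro o ho
        have hmax : max o ξ₁.1 < κ.ord := max_lt ho ξ₁.2
        have h1 : ξ₁ ≤ (⟨max o ξ₁.1, hmax⟩ : Set.Iio κ.ord) := le_max_right o ξ₁.1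
        obtain ⟨w, hw, hws⟩ := Finset.mem_image.mp
          (by rw [himg (le_refl ξ₁) h1]; exact hsstar :
            sstar ∈ Finset.image (levPred h htr h1) (s ⟨max o ξ₁.1, hmax⟩ 1).support)
        exact ⟨w.1, ⟨⟨max o ξ₁.1, hmax⟩, h1, w, hw, hws, rfl⟩,
          by rw [w.2]; exact le_max_left o ξ₁.1⟩
    · -- unbounded case
      push_neg at hbd
      choose f hf using hbd
      have hcof : ∀ ξ : Set.Iio κ.ord, ξ < f ((s ξ 1).support.card) := by
        intro ξ
        by_contra hcon
        push_neg at hcon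
        exact absurd (hmono hcon) (not_le.mpr (hf _))
      have hP0 : ∃ a : T, ∃ w : Lev h (f 0).1, w ∈ (s (f 0) 1).support ∧ a = w.1 := by
        obtain ⟨w0, hw0⟩ := hne (f 0)
        exact ⟨w0.1, w0, hw0, rfl⟩
      have hPstep : ∀ (i j : Set.Iio κ.ord) (a : T), i ≤ j →
          (∃ w : Lev h i.1, w ∈ (s i 1).support ∧ a = w.1) →
          ∃ b : T, (∃ w : Lev h j.1, w ∈ (s j 1).support ∧ b = w.1) ∧
            (lt a b ∨ a = b) := by
        intro i j a hle hp
        obtain ⟨w, hw, rfl⟩ := hp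
        obtain ⟨w', hw', he⟩ := Finset.mem_image.mp (hext hle hw)
        refine ⟨w'.1, ⟨w', hw', rfl⟩, ?_⟩
        rw [← he]
        exact levPred_le' h htr hle w'
      obtain ⟨g, hgP, hglev, hgchain⟩ := @exists_greedy_chain T ↥(Set.Iio κ.ord) _
        (fun (ξ : Set.Iio κ.ord) (u : T) =>
          ∃ w : Lev h ξ.1, w ∈ (s ξ 1).support ∧ u = w.1)
        (fun u v => lt u v ∨ u = v)
        (fun _ _ _ h1 h2 => le'_trans htr h1 h2)
        (fun _ => Or.inr rfl)
        f hP0 hPstep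
      apply chain_cofinal_branch h htr κ (Set.range fun m => (g m).2)
      · rintro _ ⟨i, rfl⟩ _ ⟨j, rfl⟩ hne'
        rcases le_total i j with hij | hij
        · rcases hgchain i j hij with h' | h'
          · exact Or.inl h'
          · exact absurd h' hne'
        · rcases hgchain j i hij with h' | h'
          · exact Or.inr h'
          · exact absurd h'.symm hne'
      · intro o ho
        obtain ⟨w, hw, hwo⟩ := hgP ((s ⟨o, ho⟩ 1).support.card)
        refine ⟨(g ((s ⟨o, ho⟩ 1).support.card)).2, ⟨_, rfl⟩, ?_⟩
        rw [hwo, w.2]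
        exact le_trans
          (le_of_lt (hcof ⟨o, ho⟩) : o ≤ (f ((s ⟨o, ho⟩ 1).support.card)).1)
          (hglev ((s ⟨o, ho⟩ 1).support.card))
end
end

section
/- For every abelian group A, every positive integer n, and every ordinal ε whose cofinality is less than ℵ_n, every A-valued n-coherent family of height ε is n-trivial. -/
noncomputable section

/-- `[ε]^m`: strictly increasing `m`-tuples of ordinals below `ε`. -/
def Tup (ε : Ordinal) (m : ℕ) : Type 1 :=
  {t : Fin m → Ordinal // StrictMono t ∧ ∀ i, t i < ε}

/-- The least entry of a tuple; by convention the "least entry" of the empty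
tuple is `ε` itself (so that functions indexed by the empty tuple have domain
`{ξ : ξ < ε}`). -/
def hd {ε : Ordinal} : {m : ℕ} → Tup ε m → Ordinal
  | 0, _ => ε
  | _ + 1, t => t.1 0

/-- The tuple obtained by removing the `i`-th entry. -/
def faceT {ε : Ordinal} {m : ℕ} (t : Tup ε (m + 1)) (i : Fin (m + 1)) : Tup ε m :=
  ⟨t.1 ∘ i.succAbove, (t.2.1.comp (Fin.strictMono_succAbove i)), fun j => t.2.2 _⟩

lemma hd_le_faceT {ε : Ordinal} {m : ℕ} (t : Tup ε (m + 1)) (i : Fin (m + 1)) :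
    hd t ≤ hd (faceT t i) := by
  cases m with
  | zero => exact (t.2.2 0).le
  | succ m => exact t.2.1.monotone (Fin.zero_le _)

/-- An `A`-valued `(m+1)`-coherent family of height `ε` (each `φ_β⃗` is a function
`{ξ : ξ < β₀} → A`, and each alternating sum over the faces of an `(m+2)`-tuple is
nonzero at only finitely many points of the common domain). -/
def CohI {A : Type*} [AddCommGroup A] {ε : Ordinal} {m : ℕ}
    (F : (t : Tup ε (m + 1)) → Set.Iio (hd t) → A) : Prop :=
  ∀ s : Tup ε (m + 2),
    {ξ : Set.Iio (hd s) |
      (∑ i : Fin (m + 2), (-1 : ℤ) ^ (i : ℕ) •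
        F (faceT s i) ⟨ξ.1, lt_of_lt_of_le ξ.2 (hd_le_faceT s i)⟩) ≠ 0}.Finite

/-- `(m+1)`-triviality of an `(m+1)`-coherent family: some family `Ψ` indexed by the
`m`-tuples (for `m = 0`, a single function on `{ξ : ξ < ε}`) has alternating sums
agreeing with `F` up to finitely many points. -/
def TrivI {A : Type*} [AddCommGroup A] {ε : Ordinal} {m : ℕ}
    (F : (t : Tup ε (m + 1)) → Set.Iio (hd t) → A) : Prop :=
  ∃ Ψ : (t : Tup ε m) → Set.Iio (hd t) → A,
    ∀ s : Tup ε (m + 1),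
      {ξ : Set.Iio (hd s) |
        (∑ i : Fin (m + 1), (-1 : ℤ) ^ (i : ℕ) •
          Ψ (faceT s i) ⟨ξ.1, lt_of_lt_of_le ξ.2 (hd_le_faceT s i)⟩) - F s ξ ≠ 0}.Finite


section Dev

variable {A : Type*} [AddCommGroup A]

def Fam (A : Type*) (γ : Ordinal) (k : ℕ) : Type _ :=
  (t : Tup γ k) → Set.Iio (hd t) → A

def dd {γ : Ordinal} {k : ℕ} (F : Fam A γ k) : Fam A γ (k + 1) := fun s ξ =>
  ∑ i : Fin (k + 1), (-1 : ℤ) ^ (i : ℕ) •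
    F (faceT s i) ⟨ξ.1, lt_of_lt_of_le ξ.2 (hd_le_faceT s i)⟩

def Fs {δ : Ordinal} (g : Set.Iio δ → A) : Prop := {ξ | g ξ ≠ 0}.Finite

lemma Fs_congr {δ : Ordinal} {g h : Set.Iio δ → A} (e : ∀ ξ, g ξ = h ξ) (hg : Fs g) : Fs h := by
  have : (fun ξ => g ξ) = h := funext e
  unfold Fs at hg ⊢
  rw [← this]; exact hg

lemma Fs_zero {δ : Ordinal} (g : Set.Iio δ → A) (h : ∀ ξ, g ξ = 0) : Fs g := by
  refine Set.Finite.subset Set.finite_empty ?_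
  intro ξ hξ; exact absurd (h ξ) hξ

lemma Fs_transfer {δ δ' : Ordinal} {g : Set.Iio δ → A} (hg : Fs g) (v : Set.Iio δ' → A)
    (hv : ∀ ξ : Set.Iio δ', v ξ ≠ 0 → ∃ h : ξ.1 < δ, g ⟨ξ.1, h⟩ ≠ 0) : Fs v := by
  have hsub : {ξ : Set.Iio δ' | v ξ ≠ 0} ⊆
      Subtype.val ⁻¹' (Subtype.val '' {ξ : Set.Iio δ | g ξ ≠ 0}) := by
    intro ξ hξ
    obtain ⟨h, hne⟩ := hv ξ hξ
    exact ⟨⟨ξ.1, h⟩, hne, rfl⟩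
  exact Set.Finite.subset
    ((hg.image _).preimage Subtype.val_injective.injOn) hsub

lemma Fs_sub {δ : Ordinal} {g h : Set.Iio δ → A} (hg : Fs g) (hh : Fs h) :
    Fs (fun ξ => g ξ - h ξ) := by
  refine Set.Finite.subset (hg.union hh) ?_
  intro ξ hξ
  by_contra hn
  simp only [Set.mem_union, Set.mem_setOf_eq, not_or, not_not] at hn
  exact hξ (by simp [hn.1, hn.2])

lemma Fs_add {δ : Ordinal} {g h : Set.Iio δ → A} (hg : Fs g) (hh : Fs h) :
    Fs (fun ξ => g ξ + h ξ) := by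
  refine Set.Finite.subset (hg.union hh) ?_
  intro ξ hξ
  by_contra hn
  simp only [Set.mem_union, Set.mem_setOf_eq, not_or, not_not] at hn
  exact hξ (by simp [hn.1, hn.2])

lemma Fs_neg {δ : Ordinal} {g : Set.Iio δ → A} (hg : Fs g) : Fs (fun ξ => - g ξ) := by
  refine Set.Finite.subset hg ?_
  intro ξ hξ
  simp only [Set.mem_setOf_eq, neg_ne_zero] at hξ ⊢
  exact hξ

lemma Fs_smul {δ : Ordinal} (c : ℤ) {g : Set.Iio δ → A} (hg : Fs g) :
    Fs (fun ξ => c • g ξ) := by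
  refine Set.Finite.subset hg ?_
  intro ξ hξ
  simp only [Set.mem_setOf_eq] at hξ ⊢
  intro h0; exact hξ (by rw [h0, smul_zero])

lemma Fs_sum {ι : Type*} [Fintype ι] {δ : Ordinal} (g : ι → Set.Iio δ → A)
    (h : ∀ i, Fs (g i)) : Fs (fun ξ => ∑ i, g i ξ) := by
  refine Set.Finite.subset (Set.finite_iUnion (fun i => h i)) ?_
  intro ξ hξ
  simp only [Set.mem_setOf_eq] at hξ
  by_contra hn
  simp only [Set.mem_iUnion, Set.mem_setOf_eq, not_exists, not_not] at hn
  exact hξ (Finset.sum_eq_zero fun i _ => hn i)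

def liftT {γ γ' : Ordinal} (h : γ ≤ γ') {k : ℕ} (t : Tup γ k) : Tup γ' k :=
  ⟨t.1, t.2.1, fun i => lt_of_lt_of_le (t.2.2 i) h⟩

lemma hd_le_liftT {γ γ' : Ordinal} (h : γ ≤ γ') {k : ℕ} (t : Tup γ k) :
    hd t ≤ hd (liftT h t) := by
  cases k with
  | zero => exact h
  | succ k => exact le_rfl

def resF {γ γ' : Ordinal} (h : γ ≤ γ') {k : ℕ} (F : Fam A γ' k) : Fam A γ k :=
  fun t ξ => F (liftT h t) ⟨ξ.1, lt_of_lt_of_le ξ.2 (hd_le_liftT h t)⟩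

lemma fam_congr {γ : Ordinal} {k : ℕ} (F : Fam A γ k) {t t' : Tup γ k} (h : t = t')
    {ξ : Set.Iio (hd t)} {ξ' : Set.Iio (hd t')} (hx : ξ.1 = ξ'.1) : F t ξ = F t' ξ' := by
  subst h
  cases Subtype.ext hx
  rfl

lemma lt_height {γ : Ordinal} {k : ℕ} (t : Tup γ k) (ξ : Set.Iio (hd t)) : ξ.1 < γ := by
  cases k with
  | zero => exact ξ.2
  | succ k => exact ξ.2.trans (t.2.2 0)

lemma hd_restrict_lt {γ γ' : Ordinal} {k : ℕ} {t : Tup γ' k} (ht : ∀ i, t.1 i < γ)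
    {ξ : Ordinal} (hξγ : ξ < γ) (hξ : ξ < hd t) :
    ξ < hd (⟨t.1, t.2.1, ht⟩ : Tup γ k) := by
  cases k with
  | zero => exact hξγ
  | succ k => exact hξ

open Classical in
def extF {γ γ' : Ordinal} {k : ℕ} (G : Fam A γ k) : Fam A γ' k := fun t ξ =>
  if h2 : ∀ i, t.1 i < γ then
    if h3 : ξ.1 < hd (⟨t.1, t.2.1, h2⟩ : Tup γ k) then G ⟨t.1, t.2.1, h2⟩ ⟨ξ.1, h3⟩ else 0
  else 0

lemma extF_pos {γ γ' : Ordinal} {k : ℕ} (G : Fam A γ k) (t : Tup γ' k)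
    (ξ : Set.Iio (hd t)) (h2 : ∀ i, t.1 i < γ)
    (h3 : ξ.1 < hd (⟨t.1, t.2.1, h2⟩ : Tup γ k)) :
    extF G t ξ = G ⟨t.1, t.2.1, h2⟩ ⟨ξ.1, h3⟩ := by
  rw [extF, dif_pos h2, dif_pos h3]

lemma extF_neg {γ γ' : Ordinal} {k : ℕ} (G : Fam A γ k) (t : Tup γ' k)
    (ξ : Set.Iio (hd t)) (h2 : ¬ ∀ i, t.1 i < γ) : extF G t ξ = 0 := by
  rw [extF, dif_neg h2]

lemma resF_extF {γ γ' : Ordinal} (h : γ ≤ γ') {k : ℕ} (G : Fam A γ k) (t : Tup γ k)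
    (ξ : Set.Iio (hd t)) : resF h (extF G) t ξ = G t ξ := by
  show extF G (liftT h t) _ = G t ξ
  rw [extF_pos (G := G) (liftT h t) _ t.2.2 ξ.2]
  exact fam_congr G (Subtype.ext rfl) rfl

lemma resF_dd {γ γ' : Ordinal} (h : γ ≤ γ') {k : ℕ} (G : Fam A γ' k) (t : Tup γ (k + 1))
    (ξ : Set.Iio (hd t)) : resF h (dd G) t ξ = dd (resF h G) t ξ := rfl

lemma resF_resF {γ₁ γ₂ γ₃ : Ordinal} (h1 : γ₁ ≤ γ₂) (h2 : γ₂ ≤ γ₃) {k : ℕ}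
    (F : Fam A γ₃ k) (t : Tup γ₁ k) (ξ : Set.Iio (hd t)) :
    resF h1 (resF h2 F) t ξ = resF (h1.trans h2) F t ξ := rfl

lemma dd_sub {γ : Ordinal} {k : ℕ} (X Y : Fam A γ k) (s : Tup γ (k + 1))
    (ξ : Set.Iio (hd s)) :
    dd (fun t ξ => X t ξ - Y t ξ) s ξ = dd X s ξ - dd Y s ξ := by
  simp only [dd, smul_sub, Finset.sum_sub_distrib]

lemma range_comp_succAbove {n : ℕ} (p : Fin (n + 2)) (q : Fin (n + 1)) :
    Set.range (p.succAbove ∘ q.succAbove) = ({p, p.succAbove q} : Set (Fin (n + 2)))ᶜ := by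
  rw [Set.range_comp, Fin.range_succAbove]
  ext x
  simp only [Set.mem_image, Set.mem_compl_iff, Set.mem_insert_iff, Set.mem_singleton_iff,
    not_or]
  constructor
  · rintro ⟨z, hz, rfl⟩
    exact ⟨Fin.succAbove_ne p z, fun e => hz (p.succAbove_right_injective e)⟩
  · rintro ⟨hx1, hx2⟩
    obtain ⟨z, rfl⟩ := Fin.exists_succAbove_eq hx1
    exact ⟨z, fun e => hx2 (by rw [e]), rfl⟩

lemma succAbove_succAbove_aux {n : ℕ} (i : Fin (n + 2)) (j : Fin (n + 1))
    (h : (j.castSucc : Fin (n + 2)) < i) (hi0 : i ≠ 0) :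
    i.succAbove ∘ j.succAbove = (j.castSucc).succAbove ∘ (i.pred hi0).succAbove := by
  have h1 : StrictMono (i.succAbove ∘ j.succAbove) :=
    (Fin.strictMono_succAbove i).comp (Fin.strictMono_succAbove j)
  have h2 : StrictMono ((j.castSucc).succAbove ∘ (i.pred hi0).succAbove) :=
    (Fin.strictMono_succAbove j.castSucc).comp (Fin.strictMono_succAbove (i.pred hi0))
  have i1 : WellFoundedLT (Fin n) := inferInstance
  refine (@StrictMono.range_inj (Fin n) (Fin (n + 2)) _ _ i1 _ _ h1 h2).1 ?_
  rw [range_comp_succAbove, range_comp_succAbove]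
  rw [Fin.succAbove_of_castSucc_lt _ _ h]
  have hle : (j.castSucc : Fin (n + 2)) ≤ (i.pred hi0).castSucc := by
    rw [Fin.le_def]
    simp only [Fin.coe_castSucc, Fin.coe_pred]
    have := Fin.lt_def.mp h
    simp only [Fin.coe_castSucc] at this
    omega
  rw [Fin.succAbove_of_le_castSucc _ _ hle, Fin.succ_pred]
  rw [Set.pair_comm]

lemma dd_dd {γ : Ordinal} {k : ℕ} (G : Fam A γ k) (s : Tup γ (k + 2)) (ξ : Set.Iio (hd s)) :
    dd (dd G) s ξ = 0 := by
  classical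
  simp only [dd, Finset.smul_sum, smul_smul]
  rw [← Finset.sum_product', Finset.univ_product_univ]
  have pair_eq : ∀ (p q : Fin (k + 2) × Fin (k + 1)),
      (p.1 : ℕ) = (q.1 : ℕ) → (p.2 : ℕ) = (q.2 : ℕ) → p = q := by
    intro p q h1 h2
    exact Prod.ext (Fin.ext h1) (Fin.ext h2)
  set g : Fin (k + 2) × Fin (k + 1) → Fin (k + 2) × Fin (k + 1) := fun p =>
    if (p.2 : ℕ) < (p.1 : ℕ) then
      (⟨p.2.1, Nat.lt_succ_of_lt p.2.isLt⟩, ⟨p.1.1 - 1, by have := p.1.isLt; omega⟩)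
    else (⟨p.2.1 + 1, by have := p.2.isLt; omega⟩,
      ⟨min p.1.1 k, by have := Nat.min_le_right p.1.1 k; omega⟩) with hgdef
  have gval1 : ∀ p, ((g p).1 : ℕ) = if (p.2 : ℕ) < (p.1 : ℕ) then p.2.1 else p.2.1 + 1 := by
    intro p
    by_cases h : (p.2 : ℕ) < (p.1 : ℕ) <;> simp [hgdef, h]
  have gval2 : ∀ p, ((g p).2 : ℕ) = if (p.2 : ℕ) < (p.1 : ℕ) then p.1.1 - 1 else min p.1.1 k := by
    intro p
    by_cases h : (p.2 : ℕ) < (p.1 : ℕ) <;> simp [hgdef, h]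
  have hinv : ∀ p, g (g p) = p := by
    intro p
    have ha := p.1.isLt; have hb := p.2.isLt
    have h1 := gval1 p; have h2 := gval2 p
    apply pair_eq
    · rw [gval1 (g p), h1, h2]
      split_ifs <;> omega
    · rw [gval2 (g p), h1, h2]
      split_ifs <;> omega
  have gne : ∀ p, g p ≠ p := by
    intro p e
    have := congrArg (fun q => ((q.1 : ℕ), (q.2 : ℕ))) e
    simp only [Prod.mk.injEq] at this
    have h1 := gval1 p; have h2 := gval2 p
    rw [this.1] at h1
    rw [this.2] at h2
    have ha := p.1.isLt; have hb := p.2.isLt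
    split_ifs at h1 h2 <;> omega
  have mkface : ∀ (a : Fin (k + 2)) (b : Fin (k + 1)) (hab : (b : ℕ) < (a : ℕ))
      (a' : Fin (k + 2)) (b' : Fin (k + 1)), (a' : ℕ) = (b : ℕ) → (b' : ℕ) = (a : ℕ) - 1 →
      faceT (faceT s a) b = faceT (faceT s a') b' := by
    intro a b hab a' b' ha' hb'
    have hlt : (b.castSucc : Fin (k + 2)) < a := by
      rw [Fin.lt_def]; simpa using hab
    have hi0 : a ≠ 0 := by
      intro e
      rw [e] at hab
      simp at hab
    have hcomp := succAbove_succAbove_aux a b hlt hi0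
    have e1 : b.castSucc = a' := Fin.ext (by simp [ha'])
    have e2 : a.pred hi0 = b' := Fin.ext (by simp [Fin.coe_pred, hb'])
    rw [e1, e2] at hcomp
    exact Subtype.ext (funext fun x => congrArg s.1 (congrFun hcomp x))
  have key : ∀ (p q : Fin (k + 2) × Fin (k + 1)),
      faceT (faceT s p.1) p.2 = faceT (faceT s q.1) q.2 →
      ((p.1 : ℕ) + (p.2 : ℕ) = (q.1 : ℕ) + (q.2 : ℕ) + 1 ∨
        (q.1 : ℕ) + (q.2 : ℕ) = (p.1 : ℕ) + (p.2 : ℕ) + 1) →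
      ∀ (pf1 : ξ.1 < hd (faceT (faceT s p.1) p.2)) (pf2 : ξ.1 < hd (faceT (faceT s q.1) q.2)),
      ((-1 : ℤ) ^ (p.1 : ℕ) * (-1) ^ (p.2 : ℕ)) • G (faceT (faceT s p.1) p.2) ⟨ξ.1, pf1⟩
        + ((-1 : ℤ) ^ (q.1 : ℕ) * (-1) ^ (q.2 : ℕ)) • G (faceT (faceT s q.1) q.2) ⟨ξ.1, pf2⟩
        = 0 := by
    intro p q htup hsign pf1 pf2
    rw [show G (faceT (faceT s p.1) p.2) ⟨ξ.1, pf1⟩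
        = G (faceT (faceT s q.1) q.2) ⟨ξ.1, pf2⟩ from fam_congr G htup rfl]
    rw [← add_smul]
    have hc : (-1 : ℤ) ^ (p.1 : ℕ) * (-1) ^ (p.2 : ℕ)
        + (-1 : ℤ) ^ (q.1 : ℕ) * (-1) ^ (q.2 : ℕ) = 0 := by
      rw [← pow_add, ← pow_add]
      rcases hsign with h | h <;> rw [h, pow_succ] <;> ring
    rw [hc, zero_smul]
  refine Finset.sum_ninvolution g ?_ (fun p _ => gne p) (fun p => Finset.mem_univ _) hinv
  rintro ⟨a, b⟩
  have ha := a.isLt; have hb := b.isLt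
  by_cases h : (b : ℕ) < (a : ℕ)
  · refine key (a, b) (g (a, b)) ?_ ?_ _ _
    · refine mkface a b h _ _ ?_ ?_
      · rw [gval1]; simp [h]
      · rw [gval2]; simp [h]
    · left
      rw [gval1, gval2]
      simp only [h, if_true]
      omega
  · have hq : ((g (a, b)).2 : ℕ) < ((g (a, b)).1 : ℕ) := by
      rw [gval1, gval2]
      simp only [h, if_false]
      omega
    rw [add_comm]
    refine key (g (a, b)) (a, b) ?_ ?_ _ _
    · refine mkface (g (a, b)).1 (g (a, b)).2 hq a b ?_ ?_
      · rw [gval2]; simp only [h, if_false]; omega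
      · rw [gval1]; simp only [h, if_false]; omega
    · left
      rw [gval1, gval2]
      simp only [h, if_false]
      omega



def IsCohF {γ : Ordinal} {k : ℕ} (F : Fam A γ k) : Prop :=
  ∀ s : Tup γ (k + 1), Fs (dd F s)

def TrivW {γ : Ordinal} (k : ℕ) (G : Fam A γ (k + 1)) (Ψ : Fam A γ k) : Prop :=
  ∀ s : Tup γ (k + 1), Fs (fun ξ => dd Ψ s ξ - G s ξ)

def Triv {γ : Ordinal} : {k : ℕ} → Fam A γ k → Prop
  | 0, F => ∀ t, Fs (F t)
  | _ + 1, F => ∃ Ψ, TrivW _ F Ψ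

lemma snoc_strictMono {δ : Ordinal} {k : ℕ} (t : Tup δ k) :
    StrictMono (Fin.snoc t.1 δ : Fin (k + 1) → Ordinal) := by
  rw [Fin.strictMono_iff_lt_succ]
  intro i
  rw [Fin.snoc_castSucc]
  by_cases hik : (i : ℕ) + 1 = k
  · have : i.succ = Fin.last k := Fin.ext (by simp [hik])
    rw [this, Fin.snoc_last]
    exact t.2.2 i
  · have hlt : (i : ℕ) + 1 < k := lt_of_le_of_ne i.isLt hik
    have : i.succ = Fin.castSucc ⟨(i : ℕ) + 1, hlt⟩ := Fin.ext (by simp)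
    rw [this, Fin.snoc_castSucc]
    exact t.2.1 (show i < ⟨(i : ℕ) + 1, hlt⟩ from by rw [Fin.lt_def]; simp)

lemma snoc_lt {γ δ : Ordinal} (h : δ < γ) {k : ℕ} (t : Tup δ k) :
    ∀ j, (Fin.snoc t.1 δ : Fin (k + 1) → Ordinal) j < γ := by
  intro j
  refine Fin.lastCases ?_ ?_ j
  · rw [Fin.snoc_last]; exact h
  · intro i; rw [Fin.snoc_castSucc]; exact (t.2.2 i).trans h

def appendT {γ δ : Ordinal} (h : δ < γ) {k : ℕ} (t : Tup δ k) : Tup γ (k + 1) :=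
  ⟨Fin.snoc t.1 δ, snoc_strictMono t, snoc_lt h t⟩

lemma hd_appendT {γ δ : Ordinal} (h : δ < γ) {k : ℕ} (t : Tup δ k) :
    hd (appendT h t) = hd t := by
  cases k with
  | zero =>
    show (Fin.snoc t.1 δ : Fin 1 → Ordinal) 0 = δ
    rw [show (0 : Fin 1) = Fin.last 0 from rfl, Fin.snoc_last]
  | succ k =>
    show (Fin.snoc t.1 δ : Fin (k + 2) → Ordinal) 0 = t.1 0
    rw [show (0 : Fin (k + 2)) = Fin.castSucc 0 from rfl, Fin.snoc_castSucc]

lemma appendT_face_last {γ δ : Ordinal} (h : δ < γ) {k : ℕ} (s : Tup δ (k + 1)) :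
    faceT (appendT h s) (Fin.last (k + 1)) = liftT h.le s :=
  Subtype.ext (funext fun a => by
    show (Fin.snoc s.1 δ : Fin (k + 2) → Ordinal) ((Fin.last (k + 1)).succAbove a) = s.1 a
    rw [Fin.succAbove_last, Fin.snoc_castSucc])

lemma appendT_face_castSucc {γ δ : Ordinal} (h : δ < γ) {k : ℕ} (s : Tup δ (k + 1))
    (i : Fin (k + 1)) :
    faceT (appendT h s) i.castSucc = appendT h (faceT s i) :=
  Subtype.ext (funext fun a => by
    show (Fin.snoc s.1 δ : Fin (k + 2) → Ordinal) (i.castSucc.succAbove a)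
      = (Fin.snoc (s.1 ∘ i.succAbove) δ : Fin (k + 1) → Ordinal) a
    refine Fin.lastCases ?_ ?_ a
    · have : i.castSucc.succAbove (Fin.last k) = Fin.last (k + 1) := by
        rw [Fin.succAbove_of_le_castSucc _ _
          (Fin.castSucc_le_castSucc_iff.mpr (Fin.le_last i)), Fin.succ_last]
      rw [this, Fin.snoc_last, Fin.snoc_last]
    · intro a'
      have : i.castSucc.succAbove a'.castSucc = (i.succAbove a').castSucc := by
        by_cases hlt : (a' : ℕ) < (i : ℕ)
        · rw [Fin.succAbove_castSucc_of_lt _ _ (by rw [Fin.lt_def]; simpa using hlt),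
            Fin.succAbove_of_castSucc_lt _ _ (by rw [Fin.lt_def]; simpa using hlt)]
        · rw [Fin.succAbove_castSucc_of_le _ _ (by rw [Fin.le_def]; simp; omega),
            Fin.succAbove_of_le_castSucc _ _ (by rw [Fin.le_def]; simp; omega),
            Fin.succ_castSucc]
      rw [this, Fin.snoc_castSucc, Fin.snoc_castSucc]
      rfl)

def appF {γ δ : Ordinal} (h : δ < γ) {k : ℕ} (F : Fam A γ (k + 1)) : Fam A δ k :=
  fun t ξ => ((-1 : ℤ) ^ k) • F (appendT h t) ⟨ξ.1, by rw [hd_appendT]; exact ξ.2⟩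

lemma neg_one_pow_mul_self (k : ℕ) : ((-1 : ℤ) ^ k) * ((-1 : ℤ) ^ k) = 1 := by
  rw [← pow_add, Even.neg_one_pow ⟨k, rfl⟩]

lemma neg_one_pow_mul_succ (k : ℕ) : ((-1 : ℤ) ^ k) * ((-1 : ℤ) ^ (k + 1)) = -1 := by
  rw [pow_succ, ← mul_assoc, neg_one_pow_mul_self, one_mul]

lemma triv_append {γ : Ordinal} {k : ℕ} (F : Fam A γ (k + 1)) (hF : IsCohF F)
    {δ : Ordinal} (h : δ < γ) (s : Tup δ (k + 1)) :
    Fs (fun ξ => dd (appF h F) s ξ - resF h.le F s ξ) := by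
  have hs := hF (appendT h s)
  have hpf : ∀ ξ : Set.Iio (hd s), ξ.1 < hd (appendT h s) := by
    intro ξ; rw [hd_appendT]; exact ξ.2
  have key : ∀ ξ : Set.Iio (hd s),
      dd (appF h F) s ξ - resF h.le F s ξ
        = (-1 : ℤ) ^ k • dd F (appendT h s) ⟨ξ.1, hpf ξ⟩ := by
    intro ξ
    have e1 : ∀ i : Fin (k + 1),
        F (faceT (appendT h s) i.castSucc)
            ⟨ξ.1, lt_of_lt_of_le (hpf ξ) (hd_le_faceT (appendT h s) i.castSucc)⟩
          = F (appendT h (faceT s i))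
            ⟨ξ.1, by rw [hd_appendT]; exact lt_of_lt_of_le ξ.2 (hd_le_faceT s i)⟩ :=
      fun i => fam_congr F (appendT_face_castSucc h s i) rfl
    have e2 : F (faceT (appendT h s) (Fin.last (k + 1)))
          ⟨ξ.1, lt_of_lt_of_le (hpf ξ) (hd_le_faceT (appendT h s) (Fin.last (k + 1)))⟩
        = resF h.le F s ξ :=
      fam_congr F (appendT_face_last h s) rfl
    show dd (appF h F) s ξ - resF h.le F s ξ
      = (-1 : ℤ) ^ k • ∑ i : Fin (k + 2), (-1 : ℤ) ^ (i : ℕ) •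
          F (faceT (appendT h s) i) ⟨ξ.1, lt_of_lt_of_le (hpf ξ) (hd_le_faceT (appendT h s) i)⟩
    rw [Fin.sum_univ_castSucc]
    simp only [Fin.coe_castSucc, Fin.val_last]
    rw [e2, smul_add, Finset.smul_sum]
    simp only [smul_smul, e1]
    rw [neg_one_pow_mul_succ, neg_one_smul]
    rw [sub_eq_add_neg]
    congr 1
    show dd (appF h F) s ξ = _
    simp only [dd, appF, smul_smul]
    refine Finset.sum_congr rfl ?_
    intro i _
    rw [mul_comm]
  refine Fs_transfer (Fs_smul ((-1 : ℤ) ^ k) hs) _ ?_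
  intro ξ hne
  refine ⟨hpf ξ, ?_⟩
  rw [← key ξ]
  exact hne


lemma succ_case {δ : Ordinal} {k : ℕ} (F : Fam A (δ + 1) (k + 1)) (hF : IsCohF F) :
    ∃ Ψ, TrivW k F Ψ := by
  have hδ : δ < δ + 1 := Order.lt_add_one_iff.mpr le_rfl
  refine ⟨extF (appF hδ F), ?_⟩
  intro s
  by_cases hs : ∀ i, s.1 i < δ
  · have h1 := triv_append F hF hδ ⟨s.1, s.2.1, hs⟩
    refine Fs_transfer h1 _ ?_
    intro ξ hne
    have hpf : ξ.1 < hd (⟨s.1, s.2.1, hs⟩ : Tup δ (k + 1)) := ξ.2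
    refine ⟨hpf, ?_⟩
    have hξδ : ξ.1 < δ := lt_trans ξ.2 (hs 0)
    have e_dd : dd (extF (appF hδ F)) s ξ
        = dd (appF hδ F) (⟨s.1, s.2.1, hs⟩ : Tup δ (k + 1)) ⟨ξ.1, hpf⟩ := by
      simp only [dd]
      refine Finset.sum_congr rfl ?_
      intro i _
      congr 1
      have h2 : ∀ j, (faceT s i).1 j < δ := fun j => hs _
      rw [extF_pos (appF hδ F) (faceT s i) _ h2
        (hd_restrict_lt h2 hξδ (lt_of_lt_of_le ξ.2 (hd_le_faceT s i)))]
      exact fam_congr _ (Subtype.ext rfl) rfl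
    have e_F : F s ξ = resF hδ.le F (⟨s.1, s.2.1, hs⟩ : Tup δ (k + 1)) ⟨ξ.1, hpf⟩ :=
      fam_congr F (Subtype.ext rfl) rfl
    show dd (appF hδ F) (⟨s.1, s.2.1, hs⟩ : Tup δ (k + 1)) ⟨ξ.1, hpf⟩
      - resF hδ.le F (⟨s.1, s.2.1, hs⟩ : Tup δ (k + 1)) ⟨ξ.1, hpf⟩ ≠ 0
    rw [← e_dd, ← e_F]
    exact hne
  · push_neg at hs
    obtain ⟨i0, hi0⟩ := hs
    have hbound : ∀ j : Fin (k + 1), s.1 j ≤ δ := fun j =>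
      Order.lt_add_one_iff.mp (s.2.2 j)
    have hlast : s.1 (Fin.last k) = δ :=
      le_antisymm (hbound _) (le_trans hi0 (s.2.1.monotone (Fin.le_last i0)))
    refine Fs_zero _ ?_
    intro ξ
    have hξδ : ξ.1 < δ := by
      have h0 : hd s ≤ δ := le_trans (s.2.1.monotone (Fin.zero_le (Fin.last k))) hlast.le
      exact lt_of_lt_of_le ξ.2 h0
    have hfb : ∀ j, (faceT s (Fin.last k)).1 j < δ := by
      intro j
      show s.1 ((Fin.last k).succAbove j) < δ
      rw [Fin.succAbove_last]
      exact lt_of_lt_of_le (s.2.1 (Fin.castSucc_lt_last j)) hlast.le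
    show dd (extF (appF hδ F)) s ξ - F s ξ = 0
    simp only [dd]
    rw [Fin.sum_univ_castSucc]
    have hzero : ∀ i' : Fin k, (-1 : ℤ) ^ ((i'.castSucc : Fin (k + 1)) : ℕ) •
        extF (appF hδ F) (faceT s i'.castSucc)
          ⟨ξ.1, lt_of_lt_of_le ξ.2 (hd_le_faceT s i'.castSucc)⟩ = 0 := by
      intro i'
      rw [extF_neg]
      · exact smul_zero _
      · intro hall
        obtain ⟨z, hz⟩ := Fin.exists_succAbove_eq
          ((Fin.castSucc_lt_last i').ne' : Fin.last k ≠ i'.castSucc)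
        have := hall z
        rw [show (faceT s i'.castSucc).1 z = s.1 (i'.castSucc.succAbove z) from rfl, hz,
          hlast] at this
        exact absurd this (lt_irrefl δ)
    rw [Finset.sum_eq_zero (fun i' _ => hzero i'), zero_add]
    rw [extF_pos (appF hδ F) (faceT s (Fin.last k)) _ hfb
      (hd_restrict_lt hfb hξδ (lt_of_lt_of_le ξ.2 (hd_le_faceT s (Fin.last k))))]
    have htup : appendT hδ (⟨(faceT s (Fin.last k)).1, (faceT s (Fin.last k)).2.1, hfb⟩ :
        Tup δ k) = s := by
      apply Subtype.ext
      funext a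
      show (Fin.snoc (s.1 ∘ (Fin.last k).succAbove) δ : Fin (k + 1) → Ordinal) a = s.1 a
      rw [Fin.succAbove_last]
      refine Fin.lastCases ?_ ?_ a
      · rw [Fin.snoc_last, hlast]
      · intro a'
        rw [Fin.snoc_castSucc]
        rfl
    show (-1 : ℤ) ^ ((Fin.last k : Fin (k + 1)) : ℕ) •
      appF hδ F (⟨(faceT s (Fin.last k)).1, (faceT s (Fin.last k)).2.1, hfb⟩ : Tup δ k)
        ⟨ξ.1, _⟩ - F s ξ = 0
    simp only [appF, Fin.val_last, smul_smul, neg_one_pow_mul_self, one_smul]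
    rw [fam_congr F htup (rfl : ξ.1 = ξ.1)]
    exact sub_self _


lemma dd_add {γ : Ordinal} {k : ℕ} (X Y : Fam A γ k) (s : Tup γ (k + 1))
    (ξ : Set.Iio (hd s)) :
    dd (fun t ξ => X t ξ + Y t ξ) s ξ = dd X s ξ + dd Y s ξ := by
  simp only [dd, smul_add, Finset.sum_add_distrib]

lemma exists_corr {δb δ : Ordinal} (h1 : δb ≤ δ) {k : ℕ} (Ξ : Fam A δb k) (hΞ : Triv Ξ) :
    ∃ C : Fam A δ k, (∀ (s : Tup δ (k + 1)) (ξ : Set.Iio (hd s)), dd C s ξ = 0) ∧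
      ∀ t, Fs (fun ξ => resF h1 C t ξ - Ξ t ξ) := by
  cases k with
  | zero =>
    refine ⟨fun _ _ => 0, ?_, ?_⟩
    · intro s ξ
      simp [dd]
    · intro t
      exact Fs_congr (fun ξ => (zero_sub (Ξ t ξ)).symm) (Fs_neg (hΞ t))
  | succ j =>
    obtain ⟨Λ, hΛ⟩ := hΞ
    refine ⟨dd (extF Λ), fun s ξ => dd_dd _ s ξ, ?_⟩
    intro t
    have e : ∀ ξ, dd Λ t ξ - Ξ t ξ = resF h1 (dd (extF Λ)) t ξ - Ξ t ξ := by
      intro ξ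
      rw [resF_dd]
      congr 1
      simp only [dd]
      refine Finset.sum_congr rfl fun i _ => ?_
      rw [resF_extF]
    exact Fs_congr e (hΛ t)

lemma step_lemma {γ : Ordinal} {k : ℕ} (F : Fam A γ (k + 1)) (hF : IsCohF F)
    (IH : ∀ (δ' : Ordinal) (F' : Fam A δ' k), δ'.cof < Cardinal.aleph k → IsCohF F' → Triv F')
    {δb δ : Ordinal} (h1 : δb ≤ δ) (h2 : δ < γ) (hcof : δb.cof < Cardinal.aleph k)
    (U : Fam A δb k) (hU : TrivW k (resF (h1.trans h2.le) F) U) :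
    ∃ Ψ : Fam A δ k, TrivW k (resF h2.le F) Ψ ∧ ∀ t ξ, resF h1 Ψ t ξ = U t ξ := by
  have hΘ := triv_append F hF h2
  set Θ : Fam A δ k := appF h2 F with hΘdef
  set Ξ : Fam A δb k := fun t ξ => resF h1 Θ t ξ - U t ξ with hΞdef
  have hΞcoh : IsCohF Ξ := by
    intro s
    have first : Fs (fun ξ : Set.Iio (hd s) =>
        resF h1 (dd Θ) s ξ - resF (h1.trans h2.le) F s ξ) := by
      refine Fs_transfer (hΘ (liftT h1 s)) _ ?_
      intro ξ hne
      exact ⟨lt_of_lt_of_le ξ.2 (hd_le_liftT h1 s), hne⟩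
    have e : ∀ ξ : Set.Iio (hd s),
        (resF h1 (dd Θ) s ξ - resF (h1.trans h2.le) F s ξ)
          - (dd U s ξ - resF (h1.trans h2.le) F s ξ) = dd Ξ s ξ := by
      intro ξ
      rw [hΞdef, dd_sub, ← resF_dd]
      abel
    exact Fs_congr e (Fs_sub first (hU s))
  have hΞtriv : Triv Ξ := IH δb Ξ hcof hΞcoh
  obtain ⟨C, hC1, hC2⟩ := exists_corr h1 Ξ hΞtriv
  set D : Fam A δb k := fun t ξ => U t ξ - resF h1 Θ t ξ + resF h1 C t ξ with hDdef
  have hD : ∀ t, Fs (D t) := by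
    intro t
    have e : ∀ ξ, resF h1 C t ξ - Ξ t ξ = D t ξ := by
      intro ξ
      rw [hDdef, hΞdef]; beta_reduce
      abel
    exact Fs_congr e (hC2 t)
  refine ⟨fun t ξ => Θ t ξ - C t ξ + extF D t ξ, ?_, ?_⟩
  · intro s
    have hext : Fs (fun ξ : Set.Iio (hd s) => dd (extF D) s ξ) := by
      refine Fs_congr (fun ξ => rfl) (Fs_sum (fun (i : Fin (k + 1)) ξ => (-1 : ℤ) ^ (i : ℕ) •
        extF D (faceT s i) ⟨ξ.1, lt_of_lt_of_le ξ.2 (hd_le_faceT s i)⟩) ?_)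
      intro i
      refine Fs_smul _ ?_
      by_cases hbelow : ∀ j, (faceT s i).1 j < δb
      · refine Fs_transfer (hD ⟨(faceT s i).1, (faceT s i).2.1, hbelow⟩) _ ?_
        intro ξ hne
        by_cases hh : ξ.1 < hd (⟨(faceT s i).1, (faceT s i).2.1, hbelow⟩ : Tup δb k)
        · refine ⟨hh, ?_⟩
          rw [extF_pos _ _ _ hbelow hh] at hne
          exact hne
        · exfalso
          apply hne
          rw [extF, dif_pos hbelow, dif_neg hh]
      · refine Fs_zero _ fun ξ => ?_
        rw [extF_neg _ _ _ hbelow]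
    have e : ∀ ξ : Set.Iio (hd s),
        (dd Θ s ξ - resF h2.le F s ξ) + dd (extF D) s ξ
          = dd (fun t ξ => Θ t ξ - C t ξ + extF D t ξ) s ξ - resF h2.le F s ξ := by
      intro ξ
      rw [dd_add (fun t ξ => Θ t ξ - C t ξ) (extF D), dd_sub, hC1 s ξ]
      abel
    exact Fs_congr e (Fs_add (hΘ s) hext)
  · intro t ξ
    show resF h1 Θ t ξ - resF h1 C t ξ + resF h1 (extF D) t ξ = U t ξ
    rw [resF_extF]
    show resF h1 Θ t ξ - resF h1 C t ξ + (U t ξ - resF h1 Θ t ξ + resF h1 C t ξ) = U t ξ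
    abel


open Classical in
def glueF {k : ℕ} (e : Ordinal → Ordinal) (η γ' : Ordinal)
    (Ψs : ∀ ζ : Ordinal, Fam A (e ζ) k) : Fam A γ' k := fun t ξ =>
  if h : ∃ ζ, ζ < η ∧ (∀ i, t.1 i < e ζ) ∧ ξ.1 < e ζ then
    Ψs h.choose ⟨t.1, t.2.1, h.choose_spec.2.1⟩
      ⟨ξ.1, hd_restrict_lt h.choose_spec.2.1 h.choose_spec.2.2 ξ.2⟩
  else 0

lemma glueF_eval {k : ℕ} (e : Ordinal → Ordinal) (η γ' : Ordinal)
    (hmono : ∀ {a b : Ordinal}, a ≤ b → e a ≤ e b)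
    (Ψs : ∀ ζ : Ordinal, Fam A (e ζ) k)
    (hcompat : ∀ ζ ζ' (h : ζ ≤ ζ'), ζ' < η →
      ∀ t ξ, resF (hmono h) (Ψs ζ') t ξ = Ψs ζ t ξ)
    (t : Tup γ' k) (ξ : Set.Iio (hd t)) (ζ : Ordinal) (hζ : ζ < η)
    (ht : ∀ i, t.1 i < e ζ) (hξ : ξ.1 < e ζ) :
    glueF e η γ' Ψs t ξ = Ψs ζ ⟨t.1, t.2.1, ht⟩ ⟨ξ.1, hd_restrict_lt ht hξ ξ.2⟩ := by
  have hex : ∃ ζ, ζ < η ∧ (∀ i, t.1 i < e ζ) ∧ ξ.1 < e ζ := ⟨ζ, hζ, ht, hξ⟩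
  simp only [glueF]
  rw [dif_pos hex]
  obtain ⟨hζ₁, ht₁, hξ₁⟩ := hex.choose_spec
  rcases le_total hex.choose ζ with h12 | h21
  · calc Ψs hex.choose ⟨t.1, t.2.1, ht₁⟩ ⟨ξ.1, hd_restrict_lt ht₁ hξ₁ ξ.2⟩
        = resF (hmono h12) (Ψs ζ) ⟨t.1, t.2.1, ht₁⟩ ⟨ξ.1, hd_restrict_lt ht₁ hξ₁ ξ.2⟩ :=
          (hcompat _ _ h12 hζ _ _).symm
      _ = Ψs ζ ⟨t.1, t.2.1, ht⟩ ⟨ξ.1, hd_restrict_lt ht hξ ξ.2⟩ :=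
          fam_congr _ (Subtype.ext rfl) rfl
  · calc Ψs hex.choose ⟨t.1, t.2.1, ht₁⟩ ⟨ξ.1, hd_restrict_lt ht₁ hξ₁ ξ.2⟩
        = resF (hmono h21) (Ψs hex.choose) ⟨t.1, t.2.1, ht⟩ ⟨ξ.1, hd_restrict_lt ht hξ ξ.2⟩ :=
          fam_congr _ (Subtype.ext rfl) rfl
      _ = Ψs ζ ⟨t.1, t.2.1, ht⟩ ⟨ξ.1, hd_restrict_lt ht hξ ξ.2⟩ :=
          hcompat _ _ h21 hζ₁ _ _

lemma glueF_trivW {γ : Ordinal} {k : ℕ} (F : Fam A γ (k + 1))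
    (e : Ordinal → Ordinal) (η γ' : Ordinal) (hγ' : γ' ≤ γ)
    (hmono : ∀ {a b : Ordinal}, a ≤ b → e a ≤ e b)
    (hle : ∀ ζ, ζ < η → e ζ ≤ γ')
    (hcov : ∀ β, β < γ' → ∃ ζ, ζ < η ∧ β < e ζ)
    (Ψs : ∀ ζ : Ordinal, Fam A (e ζ) k)
    (hcompat : ∀ ζ ζ' (h : ζ ≤ ζ'), ζ' < η →
      ∀ t ξ, resF (hmono h) (Ψs ζ') t ξ = Ψs ζ t ξ)
    (htriv : ∀ ζ (hζ : ζ < η), TrivW k (resF ((hle ζ hζ).trans hγ') F) (Ψs ζ)) :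
    TrivW k (resF hγ' F) (glueF e η γ' Ψs) := by
  intro s
  obtain ⟨ζ, hζ, hcov'⟩ := hcov (s.1 (Fin.last k)) (s.2.2 _)
  have hts : ∀ i, s.1 i < e ζ := fun i =>
    lt_of_le_of_lt (s.2.1.monotone (Fin.le_last i)) hcov'
  have h2 := htriv ζ hζ ⟨s.1, s.2.1, hts⟩
  refine Fs_transfer h2 _ ?_
  intro ξ hne
  have hpf : ξ.1 < hd (⟨s.1, s.2.1, hts⟩ : Tup (e ζ) (k + 1)) := ξ.2
  refine ⟨hpf, ?_⟩
  have hξe : ξ.1 < e ζ := lt_trans ξ.2 (hts 0)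
  have e_dd : dd (glueF e η γ' Ψs) s ξ
      = dd (Ψs ζ) (⟨s.1, s.2.1, hts⟩ : Tup (e ζ) (k + 1)) ⟨ξ.1, hpf⟩ := by
    simp only [dd]
    refine Finset.sum_congr rfl fun i _ => ?_
    congr 1
    rw [glueF_eval e η γ' hmono Ψs hcompat (faceT s i) _ ζ hζ (fun j => hts _) hξe]
    exact fam_congr _ (Subtype.ext rfl) rfl
  have e_F : resF hγ' F s ξ
      = resF ((hle ζ hζ).trans hγ') F (⟨s.1, s.2.1, hts⟩ : Tup (e ζ) (k + 1)) ⟨ξ.1, hpf⟩ :=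
    fam_congr F (Subtype.ext rfl) rfl
  rw [← e_dd, ← e_F]
  exact hne


section Rec

variable {γ : Ordinal} {k : ℕ} (F : Fam A γ (k + 1)) (e : Ordinal → Ordinal)
  (e_le : ∀ ζ, e ζ ≤ γ) (e_mono : ∀ {a b : Ordinal}, a ≤ b → e a ≤ e b)

def RCond (η : Ordinal) (g : ∀ ζ, ζ < η → Fam A (e ζ) k) : Prop :=
  ∃ Ψ : Fam A (e η) k, TrivW k (resF (e_le η) F) Ψ ∧
    ∀ ζ (hζ : ζ < η), ∀ t ξ, resF (e_mono hζ.le) Ψ t ξ = g ζ hζ t ξ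

open Classical in
noncomputable def RSeq : ∀ η : Ordinal, Fam A (e η) k :=
  WellFounded.fix Ordinal.lt_wf (fun η g =>
    if h : RCond F e e_le e_mono η g then h.choose else fun _ _ => 0)

open Classical in
lemma RSeq_unfold (η : Ordinal) : RSeq F e e_le e_mono η =
    (if h : RCond F e e_le e_mono η (fun ζ _ => RSeq F e e_le e_mono ζ)
      then h.choose else fun _ _ => 0) := by
  show WellFounded.fix _ _ _ = _
  rw [WellFounded.fix_eq]
  rfl

lemma RSeq_inv (hF : IsCohF F)
    (IH : ∀ (δ' : Ordinal) (F' : Fam A δ' k), δ'.cof < Cardinal.aleph k → IsCohF F' → Triv F')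
    (κo : Ordinal)
    (e_lt : ∀ ζ, ζ < κo → e ζ < γ)
    (γb_cof : ∀ η, η < κo → (Ordinal.bsup η (fun ζ _ => e ζ)).cof < Cardinal.aleph k) :
    ∀ η, η < κo →
      TrivW k (resF (e_le η) F) (RSeq F e e_le e_mono η) ∧
        ∀ ζ (hζ : ζ < η), ∀ t ξ,
          resF (e_mono hζ.le) (RSeq F e e_le e_mono η) t ξ = RSeq F e e_le e_mono ζ t ξ := by
  intro η
  induction η using Ordinal.induction with
  | _ η IHrec =>
  intro hη
  have hcompat : ∀ ζ ζ' (h : ζ ≤ ζ'), ζ' < η →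
      ∀ t ξ, resF (e_mono h) (RSeq F e e_le e_mono ζ') t ξ = RSeq F e e_le e_mono ζ t ξ := by
    intro ζ ζ' h hζ' t ξ
    rcases eq_or_lt_of_le h with rfl | hlt
    · rfl
    · exact (IHrec ζ' hζ' (hζ'.trans hη)).2 ζ hlt t ξ
  have hb_le : Ordinal.bsup η (fun ζ _ => e ζ) ≤ e η :=
    Ordinal.bsup_le fun ζ hζ => e_mono hζ.le
  have hb_le_γ : Ordinal.bsup η (fun ζ _ => e ζ) ≤ γ := hb_le.trans (e_le η)
  have hcov : ∀ β, β < Ordinal.bsup η (fun ζ _ => e ζ) → ∃ ζ, ζ < η ∧ β < e ζ := by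
    intro β hβ
    obtain ⟨ζ, hζ, hβ'⟩ := (Ordinal.lt_bsup _).mp hβ
    exact ⟨ζ, hζ, hβ'⟩
  have hres : ∀ ζ (hζ : ζ < η), ∀ t ξ,
      resF (Ordinal.le_bsup (fun ζ _ => e ζ) ζ hζ)
        (glueF e η (Ordinal.bsup η (fun ζ _ => e ζ)) (RSeq F e e_le e_mono)) t ξ
        = RSeq F e e_le e_mono ζ t ξ := by
    intro ζ hζ t ξ
    have h₁ := glueF_eval e η (Ordinal.bsup η (fun ζ _ => e ζ)) e_mono (RSeq F e e_le e_mono)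
      hcompat (liftT (Ordinal.le_bsup (fun ζ _ => e ζ) ζ hζ) t)
      ⟨ξ.1, lt_of_lt_of_le ξ.2 (hd_le_liftT (Ordinal.le_bsup (fun ζ _ => e ζ) ζ hζ) t)⟩
      ζ hζ t.2.2 (lt_height t ξ)
    show glueF e η (Ordinal.bsup η (fun ζ _ => e ζ)) (RSeq F e e_le e_mono)
        (liftT (Ordinal.le_bsup (fun ζ _ => e ζ) ζ hζ) t)
        ⟨ξ.1, lt_of_lt_of_le ξ.2 (hd_le_liftT (Ordinal.le_bsup (fun ζ _ => e ζ) ζ hζ) t)⟩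
        = RSeq F e e_le e_mono ζ t ξ
    rw [h₁]
    exact fam_congr _ (Subtype.ext rfl) rfl
  have hUtriv : TrivW k (resF hb_le_γ F)
      (glueF e η (Ordinal.bsup η (fun ζ _ => e ζ)) (RSeq F e e_le e_mono)) :=
    glueF_trivW F e η _ hb_le_γ e_mono
      (fun ζ hζ => Ordinal.le_bsup (fun ζ _ => e ζ) ζ hζ) hcov
      (RSeq F e e_le e_mono) hcompat
      (fun ζ hζ => (IHrec ζ hζ (hζ.trans hη)).1)
  obtain ⟨Ψ, hΨtriv, hΨres⟩ := step_lemma F hF IH hb_le (e_lt η hη)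
    (γb_cof η hη) (glueF e η (Ordinal.bsup η (fun ζ _ => e ζ)) (RSeq F e e_le e_mono)) hUtriv
  have hcond : RCond F e e_le e_mono η (fun ζ _ => RSeq F e e_le e_mono ζ) := by
    refine ⟨Ψ, hΨtriv, ?_⟩
    intro ζ hζ t ξ
    have step1 : resF (e_mono hζ.le) Ψ t ξ
        = resF (Ordinal.le_bsup (fun ζ _ => e ζ) ζ hζ) (resF hb_le Ψ) t ξ := rfl
    rw [step1]
    have step2 : resF (Ordinal.le_bsup (fun ζ _ => e ζ) ζ hζ) (resF hb_le Ψ) t ξ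
        = resF (Ordinal.le_bsup (fun ζ _ => e ζ) ζ hζ)
            (glueF e η (Ordinal.bsup η (fun ζ _ => e ζ)) (RSeq F e e_le e_mono)) t ξ :=
      hΨres _ _
    rw [step2]
    exact hres ζ hζ t ξ
  have hR : RSeq F e e_le e_mono η = hcond.choose := by
    rw [RSeq_unfold]; exact dif_pos hcond
  rw [hR]
  exact hcond.choose_spec

end Rec


lemma base_case (γ : Ordinal) (hγ : γ.cof < Cardinal.aleph (0 : ℕ))
    (F : Fam A γ 0) (hF : IsCohF F) : Triv F := by
  intro t
  rcases Ordinal.zero_or_succ_or_isSuccLimit γ with h0 | ⟨β, hβ⟩ | hl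
  · subst h0
    refine Set.Finite.subset Set.finite_empty ?_
    intro ξ _
    exact absurd (show ξ.1 < 0 from ξ.2) (not_lt_of_ge zero_le)
  · subst hβ
    set s : Tup (Order.succ β) 1 :=
      ⟨fun _ => β, fun a b hab => absurd (Subsingleton.elim a b) (ne_of_lt hab),
        fun _ => Order.lt_succ β⟩ with hsdef
    have hcoh := hF s
    refine Set.Finite.subset (Set.Finite.union
      (((hcoh).image Subtype.val).preimage Subtype.val_injective.injOn)
      ((Set.finite_singleton β).preimage Subtype.val_injective.injOn)) ?_
    intro ξ hξ
    simp only [Set.mem_setOf_eq] at hξ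
    by_cases hb : ξ.1 = β
    · right
      exact hb
    · left
      have hlt : ξ.1 < β := by
        have h1 : ξ.1 < Order.succ β := ξ.2
        exact lt_of_le_of_ne (Order.lt_succ_iff.mp h1) hb
    -- hd s = β
      have hdd : dd F s ⟨ξ.1, hlt⟩ = F t ξ := by
        show ∑ i : Fin 1, (-1 : ℤ) ^ (i : ℕ) •
          F (faceT s i) ⟨ξ.1, lt_of_lt_of_le hlt (hd_le_faceT s i)⟩ = F t ξ
        rw [Fin.sum_univ_one]
        simp only [Fin.val_zero, pow_zero, one_smul]
        exact fam_congr F (Subtype.ext (funext fun i => i.elim0)) rfl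
      refine ⟨⟨ξ.1, hlt⟩, ?_, rfl⟩
      simp only [Set.mem_setOf_eq]
      rw [hdd]
      exact hξ
  · exfalso
    have := Ordinal.aleph0_le_cof.mpr hl
    rw [Nat.cast_zero, Cardinal.aleph_zero] at hγ
    exact absurd hγ (not_lt.mpr this)

lemma limit_case {γ : Ordinal} {k : ℕ} (hγ : Order.IsSuccLimit γ)
    (hcof : γ.cof ≤ Cardinal.aleph (k : ℕ))
    (IH : ∀ (δ' : Ordinal) (F' : Fam A δ' k), δ'.cof < Cardinal.aleph (k : ℕ) →
      IsCohF F' → Triv F')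
    (F : Fam A γ (k + 1)) (hF : IsCohF F) : ∃ Ψ, TrivW k F Ψ := by
  obtain ⟨f, hf⟩ := Ordinal.exists_fundamental_sequence γ
  classical
  set e : Ordinal → Ordinal := fun ζ => if h : ζ < γ.cof.ord then f ζ h + 1 else γ with hedef
  have e_val : ∀ ζ (h : ζ < γ.cof.ord), e ζ = f ζ h + 1 := by
    intro ζ h
    rw [hedef]
    simp only
    rw [dif_pos h]
  have e_lt : ∀ ζ, ζ < γ.cof.ord → e ζ < γ := by
    intro ζ h
    rw [e_val ζ h, Ordinal.add_one_eq_succ]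
    exact hγ.succ_lt (hf.lt h)
  have e_le : ∀ ζ, e ζ ≤ γ := by
    intro ζ
    by_cases h : ζ < γ.cof.ord
    · exact (e_lt ζ h).le
    · rw [hedef]; simp only; rw [dif_neg h]
  have e_mono : ∀ {a b : Ordinal}, a ≤ b → e a ≤ e b := by
    intro a b hab
    by_cases h2 : b < γ.cof.ord
    · have h1 : a < γ.cof.ord := lt_of_le_of_lt hab h2
      rw [e_val a h1, e_val b h2, Ordinal.add_one_eq_succ, Ordinal.add_one_eq_succ]
      exact Order.succ_le_succ (hf.monotone h1 h2 hab)
    · have : e b = γ := by rw [hedef]; simp only; rw [dif_neg h2]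
      rw [this]
      exact e_le a
  have e_cov : ∀ β, β < γ → ∃ ζ, ζ < γ.cof.ord ∧ β < e ζ := by
    intro β hβ
    have hβ2 : β < Ordinal.blsub γ.cof.ord f := by rw [hf.blsub_eq]; exact hβ
    obtain ⟨i, hi, hle⟩ := Ordinal.lt_blsub_iff.mp hβ2
    refine ⟨i, hi, ?_⟩
    rw [e_val i hi]
    exact Order.lt_add_one_iff.mpr hle
  have γb_cof : ∀ η, η < γ.cof.ord →
      (Ordinal.bsup η (fun ζ _ => e ζ)).cof < Cardinal.aleph (k : ℕ) := by
    intro η hη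
    have hbl : Ordinal.bsup η (fun ζ _ => e ζ)
        = Ordinal.blsub η (fun ζ h => f ζ (h.trans hη)) := by
      apply le_antisymm
      · apply Ordinal.bsup_le
        intro ζ hζ
        rw [e_val ζ (hζ.trans hη), Ordinal.add_one_eq_succ]
        exact Order.succ_le_of_lt (Ordinal.lt_blsub _ ζ hζ)
      · apply Ordinal.blsub_le
        intro ζ hζ
        have h1 : f ζ (hζ.trans hη) < e ζ := by
          rw [e_val ζ (hζ.trans hη)]
          exact Order.lt_add_one_iff.mpr le_rfl
        exact lt_of_lt_of_le h1 (Ordinal.le_bsup _ ζ hζ)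
    rw [hbl]
    have h1 : (Ordinal.blsub η (fun ζ h => f ζ (h.trans hη))).cof ≤ η.card :=
      Ordinal.cof_blsub_le _
    have h2 : η.card < γ.cof := Cardinal.lt_ord.mp hη
    exact lt_of_le_of_lt h1 (lt_of_lt_of_le h2 hcof)
  have inv := RSeq_inv F e e_le e_mono hF IH γ.cof.ord e_lt γb_cof
  have hcompatκ : ∀ ζ ζ' (h : ζ ≤ ζ'), ζ' < γ.cof.ord →
      ∀ t ξ, resF (e_mono h) (RSeq F e e_le e_mono ζ') t ξ = RSeq F e e_le e_mono ζ t ξ := by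
    intro ζ ζ' h hζ' t ξ
    rcases eq_or_lt_of_le h with rfl | hlt
    · rfl
    · exact (inv ζ' hζ').2 ζ hlt t ξ
  have htriv : TrivW k (resF (le_refl γ) F)
      (glueF e γ.cof.ord γ (RSeq F e e_le e_mono)) :=
    glueF_trivW F e γ.cof.ord γ le_rfl e_mono (fun ζ hζ => e_le ζ) e_cov
      (RSeq F e e_le e_mono) hcompatκ (fun ζ hζ => (inv ζ hζ).1)
  refine ⟨glueF e γ.cof.ord γ (RSeq F e e_le e_mono), ?_⟩
  intro s
  refine Fs_congr (fun ξ => ?_) (htriv s)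
  have : resF (le_refl γ) F s ξ = F s ξ := fam_congr F (Subtype.ext rfl) rfl
  rw [this]

lemma main_thm : ∀ (k : ℕ) (γ : Ordinal), γ.cof < Cardinal.aleph (k : ℕ) →
    ∀ F : Fam A γ k, IsCohF F → Triv F := by
  intro k
  induction k with
  | zero => exact fun γ hγ F hF => base_case γ hγ F hF
  | succ k IHk =>
    intro γ hγ F hF
    show ∃ Ψ, TrivW k F Ψ
    rcases Ordinal.zero_or_succ_or_isSuccLimit γ with h0 | ⟨δ, hδ⟩ | hl
    · subst h0
      refine ⟨fun _ _ => 0, ?_⟩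
      intro s
      exact absurd (s.2.2 0) (not_lt_of_ge zero_le)
    · rw [← Ordinal.add_one_eq_succ] at hδ
      subst hδ
      exact succ_case F hF
    · have hcof_le : γ.cof ≤ Cardinal.aleph (k : ℕ) := by
        have hcast : (((k + 1 : ℕ) : Ordinal)) = Order.succ (k : Ordinal) := by
          rw [Nat.cast_succ, Ordinal.add_one_eq_succ]
        rw [hcast, Cardinal.aleph_succ] at hγ
        exact Order.lt_succ_iff.mp hγ
      exact limit_case hl hcof_le (fun δ' F' h hc => IHk δ' h F' hc) F hF

end Dev

/-- For every abelian group `A`, every positive integer `n = m + 1`, and every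
ordinal `ε` of cofinality less than `ℵ_n`, every `A`-valued `n`-coherent family of
height `ε` is `n`-trivial. -/
theorem stmt16 (A : Type*) [AddCommGroup A] (m : ℕ) (ε : Ordinal)
    (hcof : ε.cof < Cardinal.aleph (m + 1))
    (F : (t : Tup ε (m + 1)) → Set.Iio (hd t) → A) (hF : CohI F) : TrivI F := by
  have hcast : ((m + 1 : ℕ) : Ordinal) = (m : Ordinal) + 1 := by push_cast; ring
  have h := main_thm (m + 1) ε (by rw [hcast]; exact hcof) F hF
  exact h
end
end
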